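/- arXiv:0906.4321 — 8 statements merged into one kernel-verified Lean document; each statement's English description precedes it below -/
import Mathlib

section
/- In any extended awareness structure M whose possibility relations K_i are Euclidean, for every world s and every formula φ: (M,s) satisfies K_i(φ ∨ ¬φ) if and only if (M,s) satisfies K_i φ ∨ K_i ¬K_i φ. -/
namespace AwarenessPaper

/-- Formulas of the language `ℒ^{∀,K,X,A}_n(Φ,𝒳)` with `Φ = ℕ` (countably infinite
set of primitive propositions) and variables indexed by `ℕ`; agents indexed by `ℕ`. -/
inductive Fm : Type
  | prop : ℕ → Fm
  | var  : ℕ → Fm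
  | neg  : Fm → Fm
  | and  : Fm → Fm → Fm
  | k    : ℕ → Fm → Fm
  | a    : ℕ → Fm → Fm
  | x    : ℕ → Fm → Fm
  | all  : ℕ → Fm → Fm

namespace Fm

/-- Primitive propositions occurring in a formula. -/
def props : Fm → Set ℕ
  | .prop p => {p}
  | .var _ => ∅
  | .neg φ => props φ
  | .and φ ψ => props φ ∪ props ψ
  | .k _ φ => props φ
  | .a _ φ => props φ
  | .x _ φ => props φ
  | .all _ φ => props φ

/-- Free variables of a formula. -/
def free : Fm → Set ℕ
  | .prop _ => ∅
  | .var v => {v}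
  | .neg φ => free φ
  | .and φ ψ => free φ ∪ free ψ
  | .k _ φ => free φ
  | .a _ φ => free φ
  | .x _ φ => free φ
  | .all v φ => free φ \ {v}

/-- All variables occurring in a formula (free or bound). -/
def vars : Fm → Set ℕ
  | .prop _ => ∅
  | .var v => {v}
  | .neg φ => vars φ
  | .and φ ψ => vars φ ∪ vars ψ
  | .k _ φ => vars φ
  | .a _ φ => vars φ
  | .x _ φ => vars φ
  | .all v φ => insert v (vars φ)

/-- Quantifier nesting depth; a formula is quantifier-free iff `qcount φ = 0`. -/
def qcount : Fm → ℕ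
  | .prop _ => 0
  | .var _ => 0
  | .neg φ => qcount φ
  | .and φ ψ => max (qcount φ) (qcount ψ)
  | .k _ φ => qcount φ
  | .a _ φ => qcount φ
  | .x _ φ => qcount φ
  | .all _ φ => qcount φ + 1

/-- `substV v ψ φ` is `φ[x_v/ψ]`: replace free occurrences of variable `v` by `ψ`. -/
def substV (v : ℕ) (ψ : Fm) : Fm → Fm
  | .prop p => .prop p
  | .var u => if u = v then ψ else .var u
  | .neg φ => .neg (substV v ψ φ)
  | .and φ₁ φ₂ => .and (substV v ψ φ₁) (substV v ψ φ₂)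
  | .k i φ => .k i (substV v ψ φ)
  | .a i φ => .a i (substV v ψ φ)
  | .x i φ => .x i (substV v ψ φ)
  | .all u φ => if u = v then .all u φ else .all u (substV v ψ φ)

/-- `substP q ψ φ` is `φ[q/ψ]`: replace the primitive proposition `q` by `ψ`. -/
def substP (q : ℕ) (ψ : Fm) : Fm → Fm
  | .prop p => if p = q then ψ else .prop p
  | .var u => .var u
  | .neg φ => .neg (substP q ψ φ)
  | .and φ₁ φ₂ => .and (substP q ψ φ₁) (substP q ψ φ₂)
  | .k i φ => .k i (substP q ψ φ)
  | .a i φ => .a i (substP q ψ φ)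
  | .x i φ => .x i (substP q ψ φ)
  | .all u φ => .all u (substP q ψ φ)

/-- Rename primitive propositions along `τ`. -/
def rename (τ : ℕ → ℕ) : Fm → Fm
  | .prop p => .prop (τ p)
  | .var u => .var u
  | .neg φ => .neg (rename τ φ)
  | .and φ₁ φ₂ => .and (rename τ φ₁) (rename τ φ₂)
  | .k i φ => .k i (rename τ φ)
  | .a i φ => .a i (rename τ φ)
  | .x i φ => .x i (rename τ φ)
  | .all u φ => .all u (rename τ φ)

def or (φ ψ : Fm) : Fm := .neg (.and (.neg φ) (.neg ψ))
def imp (φ ψ : Fm) : Fm := Fm.or (.neg φ) ψ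
def iff (φ ψ : Fm) : Fm := .and (imp φ ψ) (imp ψ φ)
/-- `A_i^* φ`, an abbreviation for `K_i (φ ∨ ¬φ)`. -/
def astar (i : ℕ) (φ : Fm) : Fm := .k i (Fm.or φ (.neg φ))

end Fm

/-- An extended awareness structure for agents `ℕ` over `Φ = ℕ`, with set of worlds `W`:
each world has a nonempty local language `L s`, a valuation, possibility relations `R i`,
and awareness sets `Aw i s` consisting of formulas over the local language. -/
structure EAS (W : Type) where
  L : W → Set ℕ
  L_ne : ∀ s, (L s).Nonempty
  val : W → ℕ → Bool
  R : ℕ → W → W → Prop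
  Aw : ℕ → W → Set Fm
  Aw_lang : ∀ i s, ∀ φ ∈ Aw i s, Fm.props φ ⊆ L s

namespace EAS

variable {W : Type}

/-- One level of the truth definition; `univ` interprets the bodies of quantifiers
(at one lower quantifier depth).  A formula is true at `s` only if its primitive
propositions all belong to the local language `L s`. -/
def satAux (M : EAS W) (univ : W → Fm → Prop) : W → Fm → Prop
  | s, .prop p => p ∈ M.L s ∧ M.val s p = true
  | _, .var _ => False
  | s, .neg φ => Fm.props φ ⊆ M.L s ∧ ¬ satAux M univ s φ
  | s, .and φ ψ => satAux M univ s φ ∧ satAux M univ s ψ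
  | s, .k i φ => Fm.props φ ⊆ M.L s ∧ ∀ t, M.R i s t → satAux M univ t φ
  | s, .a i φ => φ ∈ M.Aw i s
  | s, .x i φ => (Fm.props φ ⊆ M.L s ∧ ∀ t, M.R i s t → satAux M univ t φ) ∧ φ ∈ M.Aw i s
  | s, .all v φ => Fm.props φ ⊆ M.L s ∧
      ∀ β : Fm, Fm.qcount β = 0 → Fm.free β = ∅ → Fm.props β ⊆ M.L s →
        univ s (Fm.substV v β φ)

/-- Truth with quantifier-depth budget `n`. -/
def satN (M : EAS W) : ℕ → W → Fm → Prop
  | 0 => M.satAux fun _ _ => False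
  | n + 1 => M.satAux (M.satN n)

/-- `(M,s) ⊨ φ`. Quantifiers range over quantifier-free sentences of the local language. -/
def sat (M : EAS W) (s : W) (φ : Fm) : Prop := M.satN (Fm.qcount φ) s φ

/-- Awareness is generated by primitive propositions. -/
def agpp (M : EAS W) : Prop :=
  ∀ i s (φ : Fm), φ ∈ M.Aw i s ↔ ∀ p ∈ Fm.props φ, Fm.prop p ∈ M.Aw i s

/-- Agents know what they are aware of. -/
def ka (M : EAS W) : Prop := ∀ i s t, M.R i s t → M.Aw i s = M.Aw i t

end EAS

/-- (Weak) validity in the class `𝒩_n(Φ,𝒳)` of all extended awareness structures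
satisfying agpp and ka: truth at every world whose local language contains all the
primitive propositions of the formula. -/
def Valid (φ : Fm) : Prop :=
  ∀ (W : Type) (M : EAS W), M.agpp → M.ka → ∀ s : W, Fm.props φ ⊆ M.L s → M.sat s φ


lemma props_of_satAux {W : Type} (M : EAS W) (u : W → Fm → Prop) :
    ∀ (φ : Fm) (s : W), M.satAux u s φ → Fm.props φ ⊆ M.L s := by
  intro φ
  induction φ with
  | prop p => intro s h; simp [Fm.props]; exact h.1
  | var v => intro s h; exact absurd h (by simp [EAS.satAux])
  | neg φ ih => intro s h; exact h.1
  | and φ ψ ihφ ihψ =>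
      intro s h
      simp only [Fm.props, Set.union_subset_iff]
      exact ⟨ihφ s h.1, ihψ s h.2⟩
  | k i φ ih => intro s h; exact h.1
  | a i φ ih => intro s h; exact M.Aw_lang i s φ h
  | x i φ ih => intro s h; exact h.1.1
  | all v φ ih => intro s h; exact h.1

lemma key {W : Type} (M : EAS W) (u : W → Fm → Prop)
    (heu : ∀ (i : ℕ) (s t u' : W), M.R i s t → M.R i s u' → M.R i t u')
    (i : ℕ) (s : W) (φ : Fm) :
    M.satAux u s (Fm.astar i φ) ↔
      M.satAux u s (Fm.or (.k i φ) (.k i (.neg (.k i φ)))) := by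
  have hor : ∀ t : W, M.satAux u t (Fm.or φ (.neg φ)) ↔ Fm.props φ ⊆ M.L t := by
    intro t
    simp only [Fm.or, EAS.satAux, Fm.props, Set.union_subset_iff, and_self]
    constructor
    · rintro ⟨h, _⟩; exact h
    · intro h
      refine ⟨h, ?_⟩
      rintro ⟨⟨_, hnp⟩, ⟨_, hnn⟩⟩
      exact hnn ⟨h, hnp⟩
  constructor
  · rintro ⟨hL, hall⟩
    have hL' : Fm.props φ ⊆ M.L s := by
      simpa [Fm.or, Fm.props, Set.union_subset_iff] using hL
    have hsucc : ∀ t, M.R i s t → Fm.props φ ⊆ M.L t := fun t ht => (hor t).1 (hall t ht)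
    by_cases hk : ∀ t, M.R i s t → M.satAux u t φ
    · refine ⟨by simpa [Fm.or, Fm.props, Set.union_subset_iff] using hL', ?_⟩
      rintro ⟨⟨_, hnk⟩, _⟩
      exact hnk ⟨hL', hk⟩
    · push_neg at hk
      obtain ⟨t0, ht0, hnt0⟩ := hk
      refine ⟨by simpa [Fm.or, Fm.props, Set.union_subset_iff] using hL', ?_⟩
      rintro ⟨_, ⟨_, hnkn⟩⟩
      apply hnkn
      refine ⟨hL', ?_⟩
      intro t ht
      refine ⟨hsucc t ht, ?_⟩
      rintro ⟨hLt, hkt⟩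
      exact hnt0 (hkt t0 (heu i s t t0 ht ht0))
  · rintro ⟨hL, hdisj⟩
    have hL' : Fm.props φ ⊆ M.L s := by
      simpa [Fm.or, Fm.props, Set.union_subset_iff] using hL
    refine ⟨by simpa [Fm.or, Fm.props, Set.union_subset_iff] using hL', ?_⟩
    intro t ht
    rw [hor t]
    by_cases hk : ∀ t', M.R i s t' → M.satAux u t' φ
    · exact props_of_satAux M u φ t (hk t ht)
    · have h2 : M.satAux u s (Fm.k i (.neg (.k i φ))) := by
        by_contra h2
        exact hdisj ⟨⟨hL', fun hkk => hk hkk.2⟩, ⟨hL', h2⟩⟩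
      exact (h2.2 t ht).1

/-- In any extended awareness structure whose possibility relations are Euclidean,
`A_i^* φ = K_i(φ ∨ ¬φ)` is equivalent to `A_i' φ = K_i φ ∨ K_i ¬K_i φ` at every world. -/
theorem stmt0 {W : Type} (M : EAS W)
    (heu : ∀ (i : ℕ) (s t u : W), M.R i s t → M.R i s u → M.R i t u)
    (i : ℕ) (s : W) (φ : Fm) :
    M.sat s (Fm.astar i φ) ↔ M.sat s (Fm.or (.k i φ) (.k i (.neg (.k i φ)))) := by
  have h1 : Fm.qcount (Fm.astar i φ) = Fm.qcount φ := by
    simp [Fm.astar, Fm.or, Fm.qcount]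
  have h2 : Fm.qcount (Fm.or (.k i φ) (.k i (.neg (.k i φ)))) = Fm.qcount φ := by
    simp [Fm.or, Fm.qcount]
  unfold EAS.sat
  rw [h1, h2]
  cases hn : Fm.qcount φ with
  | zero => exact key M _ heu i s φ
  | succ n => exact key M _ heu i s φ

end AwarenessPaper
end

section
/- In any extended awareness structure whose possibility relations are transitive, the axiom XA* is valid: for every world s where the formula is defined, if (M,s) ⊨ K_i(φ ∨ ¬φ) then (M,s) ⊨ K_i K_i(φ ∨ ¬φ). -/
namespace AwarenessPaper

/-- XA*: in transitive structures, `A_i^* φ ⇒ K_i A_i^* φ` is valid. -/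
theorem stmt1 {W : Type} (M : EAS W)
    (htr : ∀ (i : ℕ) (s t u : W), M.R i s t → M.R i t u → M.R i s u)
    (i : ℕ) (φ : Fm) (s : W) (hdef : Fm.props φ ⊆ M.L s)
    (h : M.sat s (Fm.astar i φ)) :
    M.sat s (.k i (Fm.astar i φ)) := by
  have key : ∀ (univ : W → Fm → Prop) (w : W),
      M.satAux univ w (Fm.astar i φ) → M.satAux univ w (.k i (Fm.astar i φ)) := by
    intro univ w hw
    simp only [Fm.astar, Fm.or, EAS.satAux, Fm.props, Set.union_self] at hw ⊢
    refine ⟨hw.1, fun t hst => ⟨?_, fun u htu => hw.2 u (htr i w t u hst htu)⟩⟩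
    have := hw.2 t hst
    exact this.1
  simp only [EAS.sat, Fm.astar, Fm.or, Fm.qcount, max_self] at h ⊢
  cases hq : Fm.qcount φ with
  | zero => rw [hq] at h; exact key _ s h
  | succ n => rw [hq] at h; exact key _ s h

end AwarenessPaper
end

section
/- In any extended awareness structure whose possibility relations are Euclidean, the axiom 5* is valid: at every world s where the formulas are defined, if (M,s) ⊨ ¬K_i φ ∧ K_i(φ ∨ ¬φ) then (M,s) ⊨ K_i ¬K_i φ. -/
namespace AwarenessPaper

lemma stmt2_aux {W : Type} (M : EAS W) (u : W → Fm → Prop)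
    (heu : ∀ (i : ℕ) (s t v : W), M.R i s t → M.R i s v → M.R i t v)
    (i : ℕ) (φ : Fm) (s : W)
    (h : M.satAux u s (Fm.and (.neg (.k i φ)) (Fm.astar i φ))) :
    M.satAux u s (.k i (.neg (.k i φ))) := by
  obtain ⟨⟨hls, hnk⟩, hlo, hall⟩ := h
  refine ⟨hls, fun t hst => ?_⟩
  have hlt : Fm.props φ ⊆ M.L t := by
    have := (hall t hst).1
    simpa [Fm.or, Fm.props] using this
  refine ⟨hlt, fun hk => ?_⟩
  apply hnk
  refine ⟨by simpa [Fm.props] using hls, fun v hsv => ?_⟩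
  exact hk.2 v (heu i s t v hst hsv)

/-- 5*: in Euclidean structures, `(¬K_i φ ∧ A_i^* φ) ⇒ K_i ¬K_i φ` is valid. -/
theorem stmt2 {W : Type} (M : EAS W)
    (heu : ∀ (i : ℕ) (s t u : W), M.R i s t → M.R i s u → M.R i t u)
    (i : ℕ) (φ : Fm) (s : W)
    (h : M.sat s (Fm.and (.neg (.k i φ)) (Fm.astar i φ))) :
    M.sat s (.k i (.neg (.k i φ))) := by
  have hq : Fm.qcount (Fm.and (.neg (.k i φ)) (Fm.astar i φ)) = Fm.qcount φ := by
    simp [Fm.qcount, Fm.astar, Fm.or]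
  unfold EAS.sat at h ⊢
  rw [hq] at h
  simp only [Fm.qcount] at h ⊢
  cases hn : Fm.qcount φ with
  | zero => rw [hn] at h; exact stmt2_aux M _ heu i φ s h
  | succ n => rw [hn] at h; exact stmt2_aux M _ heu i φ s h

end AwarenessPaper
end

section
/- In any extended awareness structure whose possibility relations are reflexive and Euclidean, the axiom FA* is valid: at every world s, if for every primitive proposition p ∈ L(s) there exists a K_i-successor t of s with p ∉ L(t) (i.e., agent i is 'aware*' of no proposition), then at every K_i-successor u of s, for every primitive proposition q ∈ L(u) there exists a K_i-successor of u whose language omits q. -/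
namespace AwarenessPaper

/-- FA*: in reflexive Euclidean structures, if agent `i` is aware* of no primitive
proposition at `s` (every `p ∈ L(s)` fails at some successor), then the same holds
at every `K_i`-successor of `s`. -/
theorem stmt3 {W : Type} (M : EAS W) (i : ℕ)
    (hrefl : ∀ s : W, M.R i s s)
    (heu : ∀ s t u : W, M.R i s t → M.R i s u → M.R i t u)
    (s : W) (h : ∀ p ∈ M.L s, ∃ t, M.R i s t ∧ p ∉ M.L t) :
    ∀ u, M.R i s u → ∀ q ∈ M.L u, ∃ t, M.R i u t ∧ q ∉ M.L t := by
  intro u hsu q hq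
  by_cases hqs : q ∈ M.L s
  · obtain ⟨t, hst, hqt⟩ := h q hqs
    exact ⟨t, heu s u t hsu hst, hqt⟩
  · exact ⟨s, heu s u s hsu (hrefl s), hqs⟩

end AwarenessPaper
end

section
/- (Weak Substitution) If Φ is countably infinite and the sentence φ is valid in the class of all extended awareness structures over Φ (satisfying agpp and ka), then for any primitive proposition q and any quantifier-free sentence ψ not mentioning q, the sentence φ[q/ψ] (φ with q replaced by ψ) is also valid in this class. -/
namespace AwarenessPaper

namespace WS

open Fm

lemma props_rename (f : ℕ → ℕ) : ∀ χ : Fm, props (rename f χ) = f '' props χ := by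
  intro χ
  induction χ with
  | prop p => simp [rename, props]
  | var u => simp [rename, props]
  | neg χ ih => simpa [rename, props] using ih
  | and χ₁ χ₂ ih₁ ih₂ => simp [rename, props, ih₁, ih₂, Set.image_union]
  | k i χ ih => simpa [rename, props] using ih
  | a i χ ih => simpa [rename, props] using ih
  | x i χ ih => simpa [rename, props] using ih
  | all u χ ih => simpa [rename, props] using ih

lemma rename_rename (f g : ℕ → ℕ) : ∀ χ : Fm, rename f (rename g χ) = rename (f ∘ g) χ := by
  intro χ
  induction χ with
  | prop p => simp [rename]
  | var u => simp [rename]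
  | neg χ ih => simp [rename, ih]
  | and χ₁ χ₂ ih₁ ih₂ => simp [rename, ih₁, ih₂]
  | k i χ ih => simp [rename, ih]
  | a i χ ih => simp [rename, ih]
  | x i χ ih => simp [rename, ih]
  | all u χ ih => simp [rename, ih]

lemma rename_eq_self (f : ℕ → ℕ) : ∀ χ : Fm, (∀ p ∈ props χ, f p = p) → rename f χ = χ := by
  intro χ
  induction χ with
  | prop p => intro h; simp [rename, h p (by simp [props])]
  | var u => intro h; simp [rename]
  | neg χ ih => intro h; simp [rename, ih (by simpa [props] using h)]
  | and χ₁ χ₂ ih₁ ih₂ =>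
      intro h
      simp only [props, Set.mem_union] at h
      simp [rename, ih₁ (fun p hp => h p (Or.inl hp)), ih₂ (fun p hp => h p (Or.inr hp))]
  | k i χ ih => intro h; simp [rename, ih (by simpa [props] using h)]
  | a i χ ih => intro h; simp [rename, ih (by simpa [props] using h)]
  | x i χ ih => intro h; simp [rename, ih (by simpa [props] using h)]
  | all u χ ih => intro h; simp [rename, ih (by simpa [props] using h)]

lemma substP_eq_self (q : ℕ) (ψ : Fm) : ∀ χ : Fm, q ∉ props χ → substP q ψ χ = χ := by
  intro χ
  induction χ with
  | prop p => intro h; simp [props] at h; simp [substP, Ne.symm h]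
  | var u => intro h; simp [substP]
  | neg χ ih => intro h; simp [substP, ih (by simpa [props] using h)]
  | and χ₁ χ₂ ih₁ ih₂ =>
      intro h
      simp only [props, Set.mem_union] at h
      push_neg at h
      simp [substP, ih₁ h.1, ih₂ h.2]
  | k i χ ih => intro h; simp [substP, ih (by simpa [props] using h)]
  | a i χ ih => intro h; simp [substP, ih (by simpa [props] using h)]
  | x i χ ih => intro h; simp [substP, ih (by simpa [props] using h)]
  | all u χ ih => intro h; simp [substP, ih (by simpa [props] using h)]

lemma free_rename (f : ℕ → ℕ) : ∀ χ : Fm, free (rename f χ) = free χ := by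
  intro χ
  induction χ with
  | prop p => simp [rename, free]
  | var u => simp [rename, free]
  | neg χ ih => simp [rename, free, ih]
  | and χ₁ χ₂ ih₁ ih₂ => simp [rename, free, ih₁, ih₂]
  | k i χ ih => simp [rename, free, ih]
  | a i χ ih => simp [rename, free, ih]
  | x i χ ih => simp [rename, free, ih]
  | all u χ ih => simp [rename, free, ih]

lemma qcount_rename (f : ℕ → ℕ) : ∀ χ : Fm, qcount (rename f χ) = qcount χ := by
  intro χ
  induction χ with
  | prop p => simp [rename, qcount]
  | var u => simp [rename, qcount]
  | neg χ ih => simp [rename, qcount, ih]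
  | and χ₁ χ₂ ih₁ ih₂ => simp [rename, qcount, ih₁, ih₂]
  | k i χ ih => simp [rename, qcount, ih]
  | a i χ ih => simp [rename, qcount, ih]
  | x i χ ih => simp [rename, qcount, ih]
  | all u χ ih => simp [rename, qcount, ih]

lemma qcount_substP (q : ℕ) (ψ : Fm) (hψ : qcount ψ = 0) :
    ∀ χ : Fm, qcount (substP q ψ χ) = qcount χ := by
  intro χ
  induction χ with
  | prop p =>
      by_cases h : p = q
      · simp [substP, h, qcount, hψ]
      · simp [substP, h, qcount]
  | var u => simp [substP, qcount]
  | neg χ ih => simp [substP, qcount, ih]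
  | and χ₁ χ₂ ih₁ ih₂ => simp [substP, qcount, ih₁, ih₂]
  | k i χ ih => simp [substP, qcount, ih]
  | a i χ ih => simp [substP, qcount, ih]
  | x i χ ih => simp [substP, qcount, ih]
  | all u χ ih => simp [substP, qcount, ih]

lemma free_substP (q : ℕ) (ψ : Fm) (hψ : free ψ = ∅) :
    ∀ χ : Fm, free (substP q ψ χ) = free χ := by
  intro χ
  induction χ with
  | prop p =>
      by_cases h : p = q
      · simp [substP, h, free, hψ]
      · simp [substP, h, free]
  | var u => simp [substP, free]
  | neg χ ih => simp [substP, free, ih]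
  | and χ₁ χ₂ ih₁ ih₂ => simp [substP, free, ih₁, ih₂]
  | k i χ ih => simp [substP, free, ih]
  | a i χ ih => simp [substP, free, ih]
  | x i χ ih => simp [substP, free, ih]
  | all u χ ih => simp [substP, free, ih]

lemma props_substP_subset (q : ℕ) (ψ : Fm) :
    ∀ χ : Fm, props (substP q ψ χ) ⊆ props χ ∪ props ψ := by
  intro χ
  induction χ with
  | prop p =>
      by_cases h : p = q
      · simp [substP, h, props]
      · simp [substP, h, props]
  | var u => simp [substP, props]
  | neg χ ih => simpa [substP, props] using ih
  | and χ₁ χ₂ ih₁ ih₂ =>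
      simp only [substP, props]
      intro r hr
      rcases hr with hr | hr
      · rcases ih₁ hr with h | h
        · exact Or.inl (Or.inl h)
        · exact Or.inr h
      · rcases ih₂ hr with h | h
        · exact Or.inl (Or.inr h)
        · exact Or.inr h
  | k i χ ih => simpa [substP, props] using ih
  | a i χ ih => simpa [substP, props] using ih
  | x i χ ih => simpa [substP, props] using ih
  | all u χ ih => simpa [substP, props] using ih

lemma mem_props_substP (q : ℕ) (ψ : Fm) :
    ∀ χ : Fm, ∀ r ∈ props χ, r ≠ q → r ∈ props (substP q ψ χ) := by
  intro χ
  induction χ with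
  | prop p =>
      intro r hr hrq
      simp [props] at hr
      subst hr
      simp [substP, hrq, props]
  | var u => intro r hr; simp [props] at hr
  | neg χ ih => intro r hr hrq; exact ih r hr hrq
  | and χ₁ χ₂ ih₁ ih₂ =>
      intro r hr hrq
      simp only [props, Set.mem_union] at hr ⊢
      rcases hr with hr | hr
      · exact Or.inl (ih₁ r hr hrq)
      · exact Or.inr (ih₂ r hr hrq)
  | k i χ ih => intro r hr hrq; exact ih r hr hrq
  | a i χ ih => intro r hr hrq; exact ih r hr hrq
  | x i χ ih => intro r hr hrq; exact ih r hr hrq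
  | all u χ ih => intro r hr hrq; exact ih r hr hrq

lemma props_subset_substP (q : ℕ) (ψ : Fm) :
    ∀ χ : Fm, q ∈ props χ → props ψ ⊆ props (substP q ψ χ) := by
  intro χ
  induction χ with
  | prop p =>
      intro h
      simp [props] at h
      subst h
      simp [substP, props]
  | var u => intro h; simp [props] at h
  | neg χ ih => intro h; exact ih h
  | and χ₁ χ₂ ih₁ ih₂ =>
      intro h
      simp only [props, Set.mem_union] at h
      rcases h with h | h
      · exact fun r hr => Or.inl (ih₁ h hr)
      · exact fun r hr => Or.inr (ih₂ h hr)
  | k i χ ih => intro h; exact ih h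
  | a i χ ih => intro h; exact ih h
  | x i χ ih => intro h; exact ih h
  | all u χ ih => intro h; exact ih h

lemma qcount_substV (v : ℕ) (β : Fm) (hβ : qcount β = 0) :
    ∀ χ : Fm, qcount (substV v β χ) ≤ qcount χ := by
  intro χ
  induction χ with
  | prop p => simp [substV, qcount]
  | var u =>
      by_cases h : u = v
      · simp [substV, h, qcount, hβ]
      · simp [substV, h, qcount]
  | neg χ ih => simpa [substV, qcount] using ih
  | and χ₁ χ₂ ih₁ ih₂ =>
      simp only [substV, qcount]
      exact max_le_max ih₁ ih₂
  | k i χ ih => simpa [substV, qcount] using ih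
  | a i χ ih => simpa [substV, qcount] using ih
  | x i χ ih => simpa [substV, qcount] using ih
  | all u χ ih =>
      by_cases h : u = v
      · simp [substV, h, qcount]
      · simpa [substV, h, qcount] using ih

lemma substV_eq_self (v : ℕ) (β : Fm) : ∀ χ : Fm, v ∉ free χ → substV v β χ = χ := by
  intro χ
  induction χ with
  | prop p => intro h; simp [substV]
  | var u =>
      intro h
      simp [free] at h
      simp [substV, Ne.symm h]
  | neg χ ih => intro h; simp [substV, ih (by simpa [free] using h)]
  | and χ₁ χ₂ ih₁ ih₂ =>
      intro h
      simp only [free, Set.mem_union] at h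
      push_neg at h
      simp [substV, ih₁ h.1, ih₂ h.2]
  | k i χ ih => intro h; simp [substV, ih (by simpa [free] using h)]
  | a i χ ih => intro h; simp [substV, ih (by simpa [free] using h)]
  | x i χ ih => intro h; simp [substV, ih (by simpa [free] using h)]
  | all u χ ih =>
      intro h
      by_cases huv : u = v
      · simp [substV, huv]
      · simp only [free, Set.mem_diff, Set.mem_singleton_iff] at h
        push_neg at h
        simp [substV, huv, ih (fun hv => (Ne.symm huv) (h hv))]

lemma substP_substV (q : ℕ) (ψ : Fm) (hψ : free ψ = ∅) (v : ℕ) (β : Fm) :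
    ∀ χ : Fm, substP q ψ (substV v β χ) = substV v (substP q ψ β) (substP q ψ χ) := by
  intro χ
  induction χ with
  | prop p =>
      by_cases h : p = q
      · simp [substV, substP, h, substV_eq_self v (substP q ψ β) ψ (by simp [hψ])]
      · simp [substV, substP, h]
  | var u =>
      by_cases h : u = v
      · simp [substV, substP, h]
      · simp [substV, substP, h]
  | neg χ ih => simp [substV, substP, ih]
  | and χ₁ χ₂ ih₁ ih₂ => simp [substV, substP, ih₁, ih₂]
  | k i χ ih => simp [substV, substP, ih]
  | a i χ ih => simp [substV, substP, ih]
  | x i χ ih => simp [substV, substP, ih]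
  | all u χ ih =>
      by_cases h : u = v
      · simp [substV, substP, h]
      · simp [substV, substP, h, ih]

lemma rename_substV (f : ℕ → ℕ) (v : ℕ) (β : Fm) :
    ∀ χ : Fm, rename f (substV v β χ) = substV v (rename f β) (rename f χ) := by
  intro χ
  induction χ with
  | prop p => simp [substV, rename]
  | var u =>
      by_cases h : u = v
      · simp [substV, rename, h]
      · simp [substV, rename, h]
  | neg χ ih => simp [substV, rename, ih]
  | and χ₁ χ₂ ih₁ ih₂ => simp [substV, rename, ih₁, ih₂]
  | k i χ ih => simp [substV, rename, ih]
  | a i χ ih => simp [substV, rename, ih]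
  | x i χ ih => simp [substV, rename, ih]
  | all u χ ih =>
      by_cases h : u = v
      · simp [substV, rename, h]
      · simp [substV, rename, h, ih]

end WS
namespace WS

open Fm

variable {W : Type}

lemma satAux_props (M : EAS W) (u : W → Fm → Prop) :
    ∀ (χ : Fm) (t : W), M.satAux u t χ → props χ ⊆ M.L t := by
  intro χ
  induction χ with
  | prop p => intro t h; simpa [props] using h.1
  | var u' => intro t h; exact h.elim
  | neg χ ih => intro t h; exact h.1
  | and χ₁ χ₂ ih₁ ih₂ =>
      intro t h
      simp only [props]
      exact Set.union_subset (ih₁ t h.1) (ih₂ t h.2)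
  | k i χ ih => intro t h; exact h.1
  | a i χ ih => intro t h; exact M.Aw_lang i t χ h
  | x i χ ih => intro t h; exact h.1.1
  | all u' χ ih => intro t h; exact h.1

lemma satAux_qf (M : EAS W) (u u' : W → Fm → Prop) :
    ∀ χ : Fm, qcount χ = 0 → ∀ t, (M.satAux u t χ ↔ M.satAux u' t χ) := by
  intro χ
  induction χ with
  | prop p => intro _ t; exact Iff.rfl
  | var v => intro _ t; exact Iff.rfl
  | neg χ ih =>
      intro h t
      simp only [EAS.satAux]
      exact and_congr Iff.rfl (not_congr (ih h t))
  | and χ₁ χ₂ ih₁ ih₂ =>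
      intro h t
      simp only [qcount, Nat.max_eq_zero_iff] at h
      exact and_congr (ih₁ h.1 t) (ih₂ h.2 t)
  | k i χ ih =>
      intro h t
      exact and_congr Iff.rfl (forall_congr' fun t' => imp_congr Iff.rfl (ih h t'))
  | a i χ ih => intro _ t; exact Iff.rfl
  | x i χ ih =>
      intro h t
      exact and_congr (and_congr Iff.rfl (forall_congr' fun t' => imp_congr Iff.rfl (ih h t'))) Iff.rfl
  | all v χ ih => intro h t; simp [qcount] at h

/-- interpretation of the primitive proposition `p` in the pulled-back structure. -/
def tp (q : ℕ) (ψ : Fm) (τ : ℕ → ℕ) (p : ℕ) : Fm := if p = q then ψ else .prop (τ p)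

/-- the translation of formulas: substitute `ψ` for `q`, then rename along `τ`. -/
def Tr (q : ℕ) (ψ : Fm) (τ : ℕ → ℕ) (χ : Fm) : Fm := rename τ (substP q ψ χ)

lemma Tr_prop (q : ℕ) (ψ : Fm) (τ : ℕ → ℕ) (hτψ : ∀ p ∈ props ψ, τ p = p) (p : ℕ) :
    Tr q ψ τ (.prop p) = tp q ψ τ p := by
  by_cases h : p = q
  · simp [Tr, substP, h, tp, rename_eq_self τ ψ hτψ]
  · simp [Tr, substP, h, tp, rename]

lemma Tr_neg (q : ℕ) (ψ : Fm) (τ : ℕ → ℕ) (χ : Fm) :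
    Tr q ψ τ (.neg χ) = .neg (Tr q ψ τ χ) := by simp [Tr, substP, rename]

lemma Tr_and (q : ℕ) (ψ : Fm) (τ : ℕ → ℕ) (χ₁ χ₂ : Fm) :
    Tr q ψ τ (.and χ₁ χ₂) = .and (Tr q ψ τ χ₁) (Tr q ψ τ χ₂) := by simp [Tr, substP, rename]

lemma Tr_k (q : ℕ) (ψ : Fm) (τ : ℕ → ℕ) (i : ℕ) (χ : Fm) :
    Tr q ψ τ (.k i χ) = .k i (Tr q ψ τ χ) := by simp [Tr, substP, rename]

lemma Tr_a (q : ℕ) (ψ : Fm) (τ : ℕ → ℕ) (i : ℕ) (χ : Fm) :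
    Tr q ψ τ (.a i χ) = .a i (Tr q ψ τ χ) := by simp [Tr, substP, rename]

lemma Tr_x (q : ℕ) (ψ : Fm) (τ : ℕ → ℕ) (i : ℕ) (χ : Fm) :
    Tr q ψ τ (.x i χ) = .x i (Tr q ψ τ χ) := by simp [Tr, substP, rename]

lemma Tr_var (q : ℕ) (ψ : Fm) (τ : ℕ → ℕ) (u : ℕ) :
    Tr q ψ τ (.var u) = .var u := by simp [Tr, substP, rename]

lemma Tr_all (q : ℕ) (ψ : Fm) (τ : ℕ → ℕ) (v : ℕ) (χ : Fm) :
    Tr q ψ τ (.all v χ) = .all v (Tr q ψ τ χ) := by simp [Tr, substP, rename]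

lemma Tr_substV (q : ℕ) (ψ : Fm) (hψ : free ψ = ∅) (τ : ℕ → ℕ) (v : ℕ) (β χ : Fm) :
    Tr q ψ τ (substV v β χ) = substV v (Tr q ψ τ β) (Tr q ψ τ χ) := by
  simp [Tr, substP_substV q ψ hψ, rename_substV]

lemma mem_props_Tr (q : ℕ) (ψ : Fm) (τ : ℕ → ℕ) (hτψ : ∀ p ∈ props ψ, τ p = p) :
    ∀ (χ : Fm) (r : ℕ), r ∈ props (Tr q ψ τ χ) ↔ ∃ p ∈ props χ, r ∈ props (tp q ψ τ p) := by
  intro χ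
  induction χ with
  | prop p =>
      intro r
      rw [Tr_prop q ψ τ hτψ]
      simp [props]
  | var u => intro r; simp [Tr_var, props]
  | neg χ ih => intro r; rw [Tr_neg]; simpa [props] using ih r
  | and χ₁ χ₂ ih₁ ih₂ =>
      intro r
      rw [Tr_and]
      simp only [props, Set.mem_union, ih₁ r, ih₂ r]
      constructor
      · rintro (⟨p, hp, h⟩ | ⟨p, hp, h⟩)
        · exact ⟨p, Or.inl hp, h⟩
        · exact ⟨p, Or.inr hp, h⟩
      · rintro ⟨p, hp | hp, h⟩
        · exact Or.inl ⟨p, hp, h⟩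
        · exact Or.inr ⟨p, hp, h⟩
  | k i χ ih => intro r; rw [Tr_k]; simpa [props] using ih r
  | a i χ ih => intro r; rw [Tr_a]; simpa [props] using ih r
  | x i χ ih => intro r; rw [Tr_x]; simpa [props] using ih r
  | all u χ ih => intro r; rw [Tr_all]; simpa [props] using ih r

open scoped Classical

/-- The pulled-back structure, in which `q` is interpreted as `ψ` and `τ p` plays
the role of `p` elsewhere. -/
noncomputable def pull (M : EAS W) (q : ℕ) (ψ : Fm) (τ σ : ℕ → ℕ)
    (hστ : ∀ p, τ (σ p) = p) (hσq : ∀ p, σ p ≠ q) : EAS W where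
  L t := {p | props (tp q ψ τ p) ⊆ M.L t}
  L_ne s := by
    obtain ⟨r, hr⟩ := M.L_ne s
    refine ⟨σ r, ?_⟩
    simp [tp, hσq r, hστ r, props, Set.singleton_subset_iff, hr]
  val t p := if M.satN 0 t (tp q ψ τ p) then true else false
  R := M.R
  Aw i t := {χ | ∀ p ∈ props χ, props (tp q ψ τ p) ⊆ {r | Fm.prop r ∈ M.Aw i t}}
  Aw_lang i s χ h := by
    intro p hp
    intro r hr
    have := h p hp hr
    have := M.Aw_lang i s (Fm.prop r) this
    simpa [props] using this

lemma pull_agpp (M : EAS W) (q : ℕ) (ψ : Fm) (τ σ : ℕ → ℕ)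
    (hστ : ∀ p, τ (σ p) = p) (hσq : ∀ p, σ p ≠ q) :
    (pull M q ψ τ σ hστ hσq).agpp := by
  intro i s χ
  constructor
  · intro h p hp
    simp only [pull, Set.mem_setOf_eq] at h ⊢
    intro p' hp'
    simp only [props, Set.mem_singleton_iff] at hp'
    subst hp'
    exact h _ hp
  · intro h
    simp only [pull, Set.mem_setOf_eq]
    intro p hp
    have h2 := h p hp
    simp only [pull, Set.mem_setOf_eq] at h2
    exact h2 p (by simp [props])

lemma pull_ka (M : EAS W) (hka : M.ka) (q : ℕ) (ψ : Fm) (τ σ : ℕ → ℕ)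
    (hστ : ∀ p, τ (σ p) = p) (hσq : ∀ p, σ p ≠ q) :
    (pull M q ψ τ σ hστ hσq).ka := by
  intro i s t h
  have := hka i s t h
  simp only [pull]
  rw [this]

lemma props_pull_iff (M : EAS W) (q : ℕ) (ψ : Fm) (τ σ : ℕ → ℕ)
    (hστ : ∀ p, τ (σ p) = p) (hσq : ∀ p, σ p ≠ q)
    (hτψ : ∀ p ∈ props ψ, τ p = p) (χ : Fm) (t : W) :
    props χ ⊆ (pull M q ψ τ σ hστ hσq).L t ↔ props (Tr q ψ τ χ) ⊆ M.L t := by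
  constructor
  · intro h r hr
    obtain ⟨p, hp, hrp⟩ := (mem_props_Tr q ψ τ hτψ χ r).mp hr
    exact h hp hrp
  · intro h p hp r hr
    exact h ((mem_props_Tr q ψ τ hτψ χ r).mpr ⟨p, hp, hr⟩)

lemma aw_pull_iff (M : EAS W) (hM : M.agpp) (q : ℕ) (ψ : Fm) (τ σ : ℕ → ℕ)
    (hστ : ∀ p, τ (σ p) = p) (hσq : ∀ p, σ p ≠ q)
    (hτψ : ∀ p ∈ props ψ, τ p = p) (χ : Fm) (i : ℕ) (t : W) :
    χ ∈ (pull M q ψ τ σ hστ hσq).Aw i t ↔ Tr q ψ τ χ ∈ M.Aw i t := by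
  rw [hM i t (Tr q ψ τ χ)]
  constructor
  · intro h r hr
    obtain ⟨p, hp, hrp⟩ := (mem_props_Tr q ψ τ hτψ χ r).mp hr
    exact h p hp hrp
  · intro h p hp r hr
    exact h r ((mem_props_Tr q ψ τ hτψ χ r).mpr ⟨p, hp, hr⟩)

end WS
namespace WS

open Fm
open scoped Classical

variable {W : Type}

lemma helper (M : EAS W) (hM : M.agpp) (q : ℕ) (ψ : Fm)
    (hψ0 : qcount ψ = 0) (hψf : free ψ = ∅)
    (τ σ : ℕ → ℕ) (hστ : ∀ p, τ (σ p) = p) (hσq : ∀ p, σ p ≠ q)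
    (hτψ : ∀ p ∈ props ψ, τ p = p)
    (u u' : W → Fm → Prop) (m : ℕ)
    (hu : ∀ s δ, qcount δ ≤ m → (u s δ ↔ u' s (Tr q ψ τ δ))) :
    ∀ χ : Fm, qcount χ ≤ m + 1 → ∀ t : W,
      ((pull M q ψ τ σ hστ hσq).satAux u t χ ↔ M.satAux u' t (Tr q ψ τ χ)) := by
  intro χ
  induction χ with
  | prop p =>
      intro _ t
      rw [Tr_prop q ψ τ hτψ]
      have hqf : qcount (tp q ψ τ p) = 0 := by
        by_cases h : p = q <;> simp [tp, h, hψ0, qcount]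
      rw [satAux_qf M u' (fun _ _ => False) _ hqf t]
      show (p ∈ (pull M q ψ τ σ hστ hσq).L t ∧ (pull M q ψ τ σ hστ hσq).val t p = true) ↔ _
      constructor
      · rintro ⟨hL, hval⟩
        by_cases h : M.satN 0 t (tp q ψ τ p)
        · exact h
        · exfalso
          have hv2 : (pull M q ψ τ σ hστ hσq).val t p = false := by
            show (if M.satN 0 t (tp q ψ τ p) then true else false) = false
            rw [if_neg h]
          rw [hv2] at hval
          exact Bool.false_ne_true hval
      · intro h
        have h' : M.satN 0 t (tp q ψ τ p) := h
        refine ⟨?_, ?_⟩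
        · show props (tp q ψ τ p) ⊆ M.L t
          exact satAux_props M _ _ t h'
        · show (if M.satN 0 t (tp q ψ τ p) then true else false) = true
          rw [if_pos h']
  | var v => intro _ t; rw [Tr_var]; simp [EAS.satAux]
  | neg χ ih =>
      intro hc t
      rw [Tr_neg]
      simp only [EAS.satAux]
      exact and_congr (props_pull_iff M q ψ τ σ hστ hσq hτψ χ t)
        (not_congr (ih (by simpa [qcount] using hc) t))
  | and χ₁ χ₂ ih₁ ih₂ =>
      intro hc t
      rw [Tr_and]
      simp only [EAS.satAux]
      simp only [qcount, max_le_iff] at hc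
      exact and_congr (ih₁ hc.1 t) (ih₂ hc.2 t)
  | k i χ ih =>
      intro hc t
      rw [Tr_k]
      simp only [EAS.satAux]
      exact and_congr (props_pull_iff M q ψ τ σ hστ hσq hτψ χ t)
        (forall_congr' fun t' => imp_congr Iff.rfl (ih (by simpa [qcount] using hc) t'))
  | a i χ ih =>
      intro hc t
      rw [Tr_a]
      simp only [EAS.satAux]
      exact aw_pull_iff M hM q ψ τ σ hστ hσq hτψ χ i t
  | x i χ ih =>
      intro hc t
      rw [Tr_x]
      simp only [EAS.satAux]
      exact and_congr
        (and_congr (props_pull_iff M q ψ τ σ hστ hσq hτψ χ t)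
          (forall_congr' fun t' => imp_congr Iff.rfl (ih (by simpa [qcount] using hc) t')))
        (aw_pull_iff M hM q ψ τ σ hστ hσq hτψ χ i t)
  | all v χ ih =>
      intro hc t
      rw [Tr_all]
      simp only [EAS.satAux]
      have hcχ : qcount χ ≤ m := by
        simp only [qcount] at hc; omega
      refine and_congr (props_pull_iff M q ψ τ σ hστ hσq hτψ χ t) ?_
      constructor
      · intro h γ hγ0 hγf hγL
        have hβ0 : qcount (rename σ γ) = 0 := by rw [qcount_rename]; exact hγ0
        have hβL : props (rename σ γ) ⊆ (pull M q ψ τ σ hστ hσq).L t := by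
          intro p hp
          rw [props_rename] at hp
          obtain ⟨p₀, hp₀, rfl⟩ := hp
          show props (tp q ψ τ (σ p₀)) ⊆ M.L t
          simp only [tp, if_neg (hσq p₀), hστ p₀, props, Set.singleton_subset_iff]
          exact hγL hp₀
        have h1 := h (rename σ γ) hβ0 (by rw [free_rename]; exact hγf) hβL
        have h2 := (hu t _ (le_trans (qcount_substV v _ hβ0 χ) hcχ)).mp h1
        rw [Tr_substV q ψ hψf] at h2
        have hTσ : Tr q ψ τ (rename σ γ) = γ := by
          have hnq : q ∉ props (rename σ γ) := by
            rw [props_rename]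
            rintro ⟨p₀, _, hp₀⟩
            exact hσq p₀ hp₀
          rw [Tr, substP_eq_self q ψ _ hnq, rename_rename]
          exact rename_eq_self _ γ (fun p _ => hστ p)
        rw [hTσ] at h2
        exact h2
      · intro h β hβ0 hβf hβL
        refine (hu t _ (le_trans (qcount_substV v β hβ0 χ) hcχ)).mpr ?_
        rw [Tr_substV q ψ hψf]
        exact h (Tr q ψ τ β)
          (by rw [Tr, qcount_rename, qcount_substP q ψ hψ0]; exact hβ0)
          (by rw [Tr, free_rename, free_substP q ψ hψf]; exact hβf)
          ((props_pull_iff M q ψ τ σ hστ hσq hτψ β t).mp hβL)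

lemma main (M : EAS W) (hM : M.agpp) (q : ℕ) (ψ : Fm)
    (hψ0 : qcount ψ = 0) (hψf : free ψ = ∅)
    (τ σ : ℕ → ℕ) (hστ : ∀ p, τ (σ p) = p) (hσq : ∀ p, σ p ≠ q)
    (hτψ : ∀ p ∈ props ψ, τ p = p) :
    ∀ (n : ℕ) (χ : Fm), qcount χ ≤ n → ∀ t : W,
      ((pull M q ψ τ σ hστ hσq).satN n t χ ↔ M.satN n t (Tr q ψ τ χ)) := by
  intro n
  induction n with
  | zero =>
      intro χ hχ t
      exact helper M hM q ψ hψ0 hψf τ σ hστ hσq hτψ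
        (fun _ _ => False) (fun _ _ => False) 0
        (fun s δ _ => Iff.rfl) χ (by omega) t
  | succ n ih =>
      intro χ hχ t
      exact helper M hM q ψ hψ0 hψf τ σ hστ hσq hτψ
        ((pull M q ψ τ σ hστ hσq).satN n) (M.satN n) n
        (fun s δ hδ => ih δ hδ s) χ hχ t

def bnd : Fm → ℕ
  | .prop p => p + 1
  | .var _ => 0
  | .neg φ => bnd φ
  | .and φ ψ => max (bnd φ) (bnd ψ)
  | .k _ φ => bnd φ
  | .a _ φ => bnd φ
  | .x _ φ => bnd φ
  | .all _ φ => bnd φ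

lemma lt_bnd : ∀ χ : Fm, ∀ p ∈ props χ, p < bnd χ := by
  intro χ
  induction χ with
  | prop p => intro r hr; simp [props] at hr; subst hr; simp [bnd]
  | var u => intro r hr; simp [props] at hr
  | neg χ ih => intro r hr; exact ih r hr
  | and χ₁ χ₂ ih₁ ih₂ =>
      intro r hr
      simp only [props, Set.mem_union] at hr
      rcases hr with hr | hr
      · exact lt_of_lt_of_le (ih₁ r hr) (le_max_left _ _)
      · exact lt_of_lt_of_le (ih₂ r hr) (le_max_right _ _)
  | k i χ ih => intro r hr; exact ih r hr
  | a i χ ih => intro r hr; exact ih r hr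
  | x i χ ih => intro r hr; exact ih r hr
  | all u χ ih => intro r hr; exact ih r hr

lemma exists_tausigma (N q : ℕ) (hqN : q < N) :
    ∃ τ σ : ℕ → ℕ, (∀ p, τ (σ p) = p) ∧ (∀ p, σ p ≠ q) ∧ (∀ p, p < N → τ p = p) := by
  refine ⟨fun p => if p < N then p else if p = N then q else p - 1,
          fun p => if p = q then N else if p < N then p else p + 1, ?_, ?_, ?_⟩
  · intro p; dsimp only; split_ifs <;> omega
  · intro p; dsimp only; split_ifs <;> omega
  · intro p h; dsimp only; rw [if_pos h]

end WS

/-- Weak Substitution: if the sentence `φ` is valid, `q` is a primitive proposition,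
and `ψ` is a quantifier-free sentence not mentioning `q`, then `φ[q/ψ]` is valid. -/
theorem stmt4 (φ : Fm) (hsent : Fm.free φ = ∅) (hv : Valid φ)
    (q : ℕ) (ψ : Fm) (hqf : Fm.qcount ψ = 0) (hψs : Fm.free ψ = ∅)
    (hq : q ∉ Fm.props ψ) :
    Valid (Fm.substP q ψ φ) := by
  intro W M hagpp hka s hlang
  set N : ℕ := max (WS.bnd φ) (max (WS.bnd ψ) (q + 1)) with hN
  have hqN : q < N := lt_of_lt_of_le (Nat.lt_succ_self q)
    (le_trans (le_max_right _ _) (le_max_right _ _))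
  have hφN : ∀ p ∈ Fm.props φ, p < N := fun p hp =>
    lt_of_lt_of_le (WS.lt_bnd φ p hp) (le_max_left _ _)
  have hψN : ∀ p ∈ Fm.props ψ, p < N := fun p hp =>
    lt_of_lt_of_le (WS.lt_bnd ψ p hp) (le_trans (le_max_left _ _) (le_max_right _ _))
  obtain ⟨τ, σ, hστ, hσq, hτfix⟩ := WS.exists_tausigma N q hqN
  have hτψ : ∀ p ∈ Fm.props ψ, τ p = p := fun p hp => hτfix p (hψN p hp)
  have hL' : Fm.props φ ⊆ (WS.pull M q ψ τ σ hστ hσq).L s := by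
    intro p hp
    show Fm.props (WS.tp q ψ τ p) ⊆ M.L s
    by_cases h : p = q
    · simp only [WS.tp, if_pos h]
      exact fun r hr => hlang (WS.props_subset_substP q ψ φ (h ▸ hp) hr)
    · simp only [WS.tp, if_neg h]
      rw [hτfix p (hφN p hp)]
      intro r hr
      simp only [Fm.props, Set.mem_singleton_iff] at hr
      rw [hr]
      exact hlang (WS.mem_props_substP q ψ φ p hp h)
  have hsat : (WS.pull M q ψ τ σ hστ hσq).sat s φ :=
    hv W (WS.pull M q ψ τ σ hστ hσq) (WS.pull_agpp M q ψ τ σ hστ hσq)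
      (WS.pull_ka M hka q ψ τ σ hστ hσq) s hL'
  have h2 := (WS.main M hagpp q ψ hqf hψs τ σ hστ hσq hτψ (Fm.qcount φ) φ le_rfl s).mp hsat
  have hTrφ : WS.Tr q ψ τ φ = Fm.substP q ψ φ := by
    unfold WS.Tr
    apply WS.rename_eq_self
    intro p hp
    rcases WS.props_substP_subset q ψ φ hp with h | h
    · exact hτfix p (hφN p h)
    · exact hτfix p (hψN p h)
  rw [hTrφ] at h2
  show M.satN (Fm.qcount (Fm.substP q ψ φ)) s (Fm.substP q ψ φ)
  rw [WS.qcount_substP q ψ hqf φ]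
  exact h2

end AwarenessPaper
end

section
/- (Substitution) If Φ is countably infinite and the sentence φ is valid in the class of all extended awareness structures over Φ, then for any primitive proposition q and any quantifier-free sentence ψ (possibly mentioning q), φ[q/ψ] is valid. -/
namespace AwarenessPaper

/-! ### Auxiliary machinery for the substitution theorem -/

namespace Fm

/-- Simultaneous substitution: `q ↦ ψ`, any other primitive `p ↦ prop (f p)`. -/
def ssub (q : ℕ) (ψ : Fm) (f : ℕ → ℕ) : Fm → Fm
  | .prop p => if p = q then ψ else .prop (f p)
  | .var u => .var u
  | .neg φ => .neg (ssub q ψ f φ)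
  | .and φ₁ φ₂ => .and (ssub q ψ f φ₁) (ssub q ψ f φ₂)
  | .k i φ => .k i (ssub q ψ f φ)
  | .a i φ => .a i (ssub q ψ f φ)
  | .x i φ => .x i (ssub q ψ f φ)
  | .all u φ => .all u (ssub q ψ f φ)

lemma props_finite : ∀ χ : Fm, χ.props.Finite
  | .prop p => Set.finite_singleton p
  | .var _ => Set.finite_empty
  | .neg φ => props_finite φ
  | .and φ₁ φ₂ => (props_finite φ₁).union (props_finite φ₂)
  | .k _ φ => props_finite φ
  | .a _ φ => props_finite φ
  | .x _ φ => props_finite φ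
  | .all _ φ => props_finite φ

variable {q : ℕ} {ψ : Fm} {f hf : ℕ → ℕ}

lemma qcount_ssub (hψ : ψ.qcount = 0) : ∀ χ : Fm, (ssub q ψ f χ).qcount = χ.qcount := by
  intro χ
  induction χ with
  | prop p => by_cases hp : p = q <;> simp [ssub, hp, hψ, qcount]
  | var u => rfl
  | neg φ ih => simpa [ssub, qcount] using ih
  | and φ₁ φ₂ ih₁ ih₂ => simp [ssub, qcount, ih₁, ih₂]
  | k i φ ih => simpa [ssub, qcount] using ih
  | a i φ ih => simpa [ssub, qcount] using ih
  | x i φ ih => simpa [ssub, qcount] using ih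
  | all u φ ih => simp [ssub, qcount, ih]

lemma free_ssub (hψ : ψ.free = ∅) : ∀ χ : Fm, (ssub q ψ f χ).free = χ.free := by
  intro χ
  induction χ with
  | prop p => by_cases hp : p = q <;> simp [ssub, hp, hψ, free]
  | var u => rfl
  | neg φ ih => simpa [ssub, free] using ih
  | and φ₁ φ₂ ih₁ ih₂ => simp [ssub, free, ih₁, ih₂]
  | k i φ ih => simpa [ssub, free] using ih
  | a i φ ih => simpa [ssub, free] using ih
  | x i φ ih => simpa [ssub, free] using ih
  | all u φ ih => simp [ssub, free, ih]

lemma qcount_rename (τ : ℕ → ℕ) : ∀ χ : Fm, (rename τ χ).qcount = χ.qcount := by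
  intro χ
  induction χ with
  | prop p => rfl
  | var u => rfl
  | neg φ ih => simpa [rename, qcount] using ih
  | and φ₁ φ₂ ih₁ ih₂ => simp [rename, qcount, ih₁, ih₂]
  | k i φ ih => simpa [rename, qcount] using ih
  | a i φ ih => simpa [rename, qcount] using ih
  | x i φ ih => simpa [rename, qcount] using ih
  | all u φ ih => simp [rename, qcount, ih]

lemma free_rename (τ : ℕ → ℕ) : ∀ χ : Fm, (rename τ χ).free = χ.free := by
  intro χ
  induction χ with
  | prop p => rfl
  | var u => rfl
  | neg φ ih => simpa [rename, free] using ih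
  | and φ₁ φ₂ ih₁ ih₂ => simp [rename, free, ih₁, ih₂]
  | k i φ ih => simpa [rename, free] using ih
  | a i φ ih => simpa [rename, free] using ih
  | x i φ ih => simpa [rename, free] using ih
  | all u φ ih => simp [rename, free, ih]

lemma mem_props_rename (τ : ℕ → ℕ) (χ : Fm) (x : ℕ) :
    x ∈ (rename τ χ).props ↔ ∃ y ∈ χ.props, τ y = x := by
  induction χ with
  | prop p => simp [rename, props, eq_comm]
  | var u => simp [rename, props]
  | neg φ ih => simpa [rename, props] using ih
  | and φ₁ φ₂ ih₁ ih₂ =>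
      simp only [rename, props, Set.mem_union, ih₁, ih₂]
      constructor
      · rintro (⟨y, hy, rfl⟩ | ⟨y, hy, rfl⟩)
        · exact ⟨y, Or.inl hy, rfl⟩
        · exact ⟨y, Or.inr hy, rfl⟩
      · rintro ⟨y, hy | hy, rfl⟩
        · exact Or.inl ⟨y, hy, rfl⟩
        · exact Or.inr ⟨y, hy, rfl⟩
  | k i φ ih => simpa [rename, props] using ih
  | a i φ ih => simpa [rename, props] using ih
  | x i φ ih => simpa [rename, props] using ih
  | all u φ ih => simpa [rename, props] using ih

lemma mem_props_ssub (χ : Fm) (x : ℕ) :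
    x ∈ (ssub q ψ f χ).props ↔
      (∃ p ∈ χ.props, p ≠ q ∧ f p = x) ∨ (q ∈ χ.props ∧ x ∈ ψ.props) := by
  induction χ with
  | prop p =>
      by_cases hp : p = q
      · subst hp
        simp only [ssub, if_pos rfl, props, Set.mem_singleton_iff]
        constructor
        · intro hx; exact Or.inr ⟨by simp, hx⟩
        · rintro (⟨p, rfl, hpq, _⟩ | ⟨_, hx⟩)
          · exact absurd rfl hpq
          · exact hx
      · have hqp : ¬ q = p := fun hc => hp hc.symm
        simp only [ssub, if_neg hp, props, Set.mem_singleton_iff]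
        constructor
        · intro hx; exact Or.inl ⟨p, by simp, hp, hx.symm⟩
        · rintro (⟨p', rfl, _, rfl⟩ | ⟨hc, _⟩)
          · rfl
          · exact absurd hc hqp
  | var u => simp [ssub, props]
  | neg φ ih => simpa [ssub, props] using ih
  | and φ₁ φ₂ ih₁ ih₂ =>
      simp only [ssub, props, Set.mem_union, ih₁, ih₂]
      constructor
      · rintro ((⟨p, hp, hpq, rfl⟩ | ⟨hq, hx⟩) | (⟨p, hp, hpq, rfl⟩ | ⟨hq, hx⟩))
        · exact Or.inl ⟨p, Or.inl hp, hpq, rfl⟩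
        · exact Or.inr ⟨Or.inl hq, hx⟩
        · exact Or.inl ⟨p, Or.inr hp, hpq, rfl⟩
        · exact Or.inr ⟨Or.inr hq, hx⟩
      · rintro (⟨p, hp | hp, hpq, rfl⟩ | ⟨hq | hq, hx⟩)
        · exact Or.inl (Or.inl ⟨p, hp, hpq, rfl⟩)
        · exact Or.inr (Or.inl ⟨p, hp, hpq, rfl⟩)
        · exact Or.inl (Or.inr ⟨hq, hx⟩)
        · exact Or.inr (Or.inr ⟨hq, hx⟩)
  | k i φ ih => simpa [ssub, props] using ih
  | a i φ ih => simpa [ssub, props] using ih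
  | x i φ ih => simpa [ssub, props] using ih
  | all u φ ih => simpa [ssub, props] using ih

lemma substV_of_not_free (v : ℕ) (β : Fm) : ∀ χ : Fm, v ∉ χ.free → substV v β χ = χ := by
  intro χ
  induction χ with
  | prop p => intro _; rfl
  | var u =>
      intro hv
      have : u ≠ v := fun h => hv (by simp [free, h])
      simp [substV, this]
  | neg φ ih => intro hv; simp only [substV]; rw [ih hv]
  | and φ₁ φ₂ ih₁ ih₂ =>
      intro hv
      simp only [free, Set.mem_union] at hv
      push_neg at hv
      simp only [substV]; rw [ih₁ hv.1, ih₂ hv.2]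
  | k i φ ih => intro hv; simp only [substV]; rw [ih hv]
  | a i φ ih => intro hv; simp only [substV]; rw [ih hv]
  | x i φ ih => intro hv; simp only [substV]; rw [ih hv]
  | all u φ ih =>
      intro hv
      by_cases hu : u = v
      · simp [substV, hu]
      · have : v ∉ φ.free := by
          intro hvf
          exact hv (by simp [free, hvf, Ne.symm hu])
        simp [substV, hu, ih this]

lemma ssub_substV (hψs : ψ.free = ∅) (v : ℕ) (β : Fm) :
    ∀ χ : Fm, ssub q ψ f (substV v β χ) = substV v (ssub q ψ f β) (ssub q ψ f χ) := by
  intro χ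
  induction χ with
  | prop p =>
      have hsub0 : ∀ β' : Fm, substV v β' ψ = ψ := fun β' =>
        substV_of_not_free v β' ψ (by simp [hψs])
      by_cases hp : p = q
      · simp [substV, ssub, hp, hsub0]
      · simp [substV, ssub, hp]
  | var u =>
      by_cases hu : u = v <;> simp [substV, ssub, hu]
  | neg φ ih => simp [substV, ssub, ih]
  | and φ₁ φ₂ ih₁ ih₂ => simp [substV, ssub, ih₁, ih₂]
  | k i φ ih => simp [substV, ssub, ih]
  | a i φ ih => simp [substV, ssub, ih]
  | x i φ ih => simp [substV, ssub, ih]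
  | all u φ ih =>
      by_cases hu : u = v <;> simp [substV, ssub, hu, ih]

lemma ssub_rename (hh : ∀ x, hf x ≠ q) (hfh : ∀ x, f (hf x) = x) :
    ∀ χ : Fm, ssub q ψ f (rename hf χ) = χ := by
  intro χ
  induction χ with
  | prop p => simp [rename, ssub, hh p, hfh p]
  | var u => rfl
  | neg φ ih => simp [rename, ssub, ih]
  | and φ₁ φ₂ ih₁ ih₂ => simp [rename, ssub, ih₁, ih₂]
  | k i φ ih => simp [rename, ssub, ih]
  | a i φ ih => simp [rename, ssub, ih]
  | x i φ ih => simp [rename, ssub, ih]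
  | all u φ ih => simp [rename, ssub, ih]

lemma ssub_eq_substP :
    ∀ χ : Fm, (∀ p ∈ χ.props, p ≠ q → f p = p) → ssub q ψ f χ = substP q ψ χ := by
  intro χ
  induction χ with
  | prop p =>
      intro hfix
      by_cases hp : p = q
      · simp [ssub, substP, hp]
      · simp [ssub, substP, hp, hfix p (by simp [props]) hp]
  | var u => intro _; rfl
  | neg φ ih => intro hfix; simp only [ssub, substP]; rw [ih hfix]
  | and φ₁ φ₂ ih₁ ih₂ =>
      intro hfix
      simp only [ssub, substP]
      rw [ih₁ fun p hp => hfix p (Set.mem_union_left _ hp),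
        ih₂ fun p hp => hfix p (Set.mem_union_right _ hp)]
  | k i φ ih => intro hfix; simp only [ssub, substP]; rw [ih hfix]
  | a i φ ih => intro hfix; simp only [ssub, substP]; rw [ih hfix]
  | x i φ ih => intro hfix; simp only [ssub, substP]; rw [ih hfix]
  | all u φ ih => intro hfix; simp only [ssub, substP]; rw [ih hfix]

end Fm

namespace EAS

variable {W : Type}

lemma satAux_props (M : EAS W) (u : W → Fm → Prop) :
    ∀ (χ : Fm) (t : W), M.satAux u t χ → χ.props ⊆ M.L t := by
  intro χ
  induction χ with
  | prop p => intro t hs; simpa [Fm.props] using hs.1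
  | var v => intro t hs; exact hs.elim
  | neg φ ih => intro t hs; exact hs.1
  | and φ₁ φ₂ ih₁ ih₂ =>
      intro t hs
      exact Set.union_subset (ih₁ t hs.1) (ih₂ t hs.2)
  | k i φ ih => intro t hs; exact hs.1
  | a i φ ih => intro t hs; exact M.Aw_lang i t φ hs
  | x i φ ih => intro t hs; exact hs.1.1
  | all v φ ih => intro t hs; exact hs.1

lemma satAux_qf_indep (M : EAS W) (u₁ u₂ : W → Fm → Prop) :
    ∀ χ : Fm, χ.qcount = 0 → ∀ t : W, (M.satAux u₁ t χ ↔ M.satAux u₂ t χ) := by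
  intro χ
  induction χ with
  | prop p => intro _ t; exact Iff.rfl
  | var v => intro _ t; exact Iff.rfl
  | neg φ ih =>
      intro h0 t
      simp only [satAux]
      rw [ih h0 t]
  | and φ₁ φ₂ ih₁ ih₂ =>
      intro h0 t
      simp only [Fm.qcount, Nat.max_eq_zero_iff] at h0
      simp only [satAux]
      rw [ih₁ h0.1 t, ih₂ h0.2 t]
  | k i φ ih =>
      intro h0 t
      simp only [satAux]
      constructor
      · rintro ⟨h1, h2⟩
        exact ⟨h1, fun t' ht' => (ih h0 t').mp (h2 t' ht')⟩
      · rintro ⟨h1, h2⟩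
        exact ⟨h1, fun t' ht' => (ih h0 t').mpr (h2 t' ht')⟩
  | a i φ ih => intro _ t; exact Iff.rfl
  | x i φ ih =>
      intro h0 t
      simp only [satAux]
      constructor <;> rintro ⟨⟨h1, h2⟩, h3⟩ <;>
        refine ⟨⟨h1, fun t' ht' => ?_⟩, h3⟩
      · exact (ih h0 t').mp (h2 t' ht')
      · exact (ih h0 t').mpr (h2 t' ht')
  | all v φ ih =>
      intro h0
      exact absurd h0 (by simp [Fm.qcount])

lemma satN_qf (M : EAS W) (n : ℕ) (χ : Fm) (t : W) (h0 : χ.qcount = 0) :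
    M.satN n t χ ↔ M.satN 0 t χ := by
  cases n with
  | zero => exact Iff.rfl
  | succ n => exact satAux_qf_indep M (M.satN n) (fun _ _ => False) χ h0 t

end EAS

/-- The local-language transformation used for the pulled-back structure. -/
def LC (q : ℕ) (ψ : Fm) (f : ℕ → ℕ) (Lt : Set ℕ) : Set ℕ :=
  {p | if p = q then ψ.props ⊆ Lt else f p ∈ Lt}

/-- The awareness-set transformation used for the pulled-back structure. -/
def AwC (q : ℕ) (ψ : Fm) (f : ℕ → ℕ) (A : Set Fm) : Set Fm :=
  {χ | ∀ p ∈ χ.props, if p = q then (∀ x ∈ ψ.props, Fm.prop x ∈ A) else Fm.prop (f p) ∈ A}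

open Classical in
/-- Pull back an extended awareness structure along the simultaneous substitution
`q ↦ ψ`, `p ↦ f p`. -/
noncomputable def EAS.pull {W : Type} (M : EAS W) (q : ℕ) (ψ : Fm) (f hf : ℕ → ℕ)
    (hh : ∀ x, hf x ≠ q) (hfh : ∀ x, f (hf x) = x) : EAS W where
  L t := LC q ψ f (M.L t)
  L_ne t := by
    obtain ⟨x, hx⟩ := M.L_ne t
    refine ⟨hf x, ?_⟩
    simp only [LC, Set.mem_setOf_eq, if_neg (hh x), hfh x]
    exact hx
  val t p := if p = q then (if M.satN 0 t ψ then true else false) else M.val t (f p)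
  R := M.R
  Aw i t := AwC q ψ f (M.Aw i t)
  Aw_lang i t χ hχ := by
    intro p hp
    have hc := hχ p hp
    by_cases hpq : p = q
    · subst hpq
      simp only [if_pos rfl] at hc
      simp only [LC, Set.mem_setOf_eq, if_pos rfl]
      intro x hx
      have := M.Aw_lang i t (Fm.prop x) (hc x hx)
      simpa [Fm.props] using this
    · simp only [if_neg hpq] at hc
      simp only [LC, Set.mem_setOf_eq, if_neg hpq]
      have := M.Aw_lang i t (Fm.prop (f p)) hc
      simpa [Fm.props] using this

namespace EAS

variable {W : Type} {M : EAS W} {q : ℕ} {ψ : Fm} {f hf : ℕ → ℕ}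
  {hh : ∀ x, hf x ≠ q} {hfh : ∀ x, f (hf x) = x}

lemma pull_L_mem (t : W) (p : ℕ) :
    p ∈ (M.pull q ψ f hf hh hfh).L t ↔ (if p = q then ψ.props ⊆ M.L t else f p ∈ M.L t) :=
  Iff.rfl

open Classical in
lemma pull_val (t : W) (p : ℕ) :
    (M.pull q ψ f hf hh hfh).val t p
      = if p = q then (if M.satN 0 t ψ then true else false) else M.val t (f p) := rfl

lemma pull_Aw_mem (i : ℕ) (t : W) (χ : Fm) :
    χ ∈ (M.pull q ψ f hf hh hfh).Aw i t ↔
      (∀ p ∈ χ.props,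
        if p = q then (∀ x ∈ ψ.props, Fm.prop x ∈ M.Aw i t) else Fm.prop (f p) ∈ M.Aw i t) :=
  Iff.rfl

lemma pull_props_subset (χ : Fm) (t : W) :
    χ.props ⊆ (M.pull q ψ f hf hh hfh).L t ↔ (Fm.ssub q ψ f χ).props ⊆ M.L t := by
  constructor
  · intro hs x hx
    rcases (Fm.mem_props_ssub χ x).1 hx with ⟨p, hp, hpq, rfl⟩ | ⟨hq, hx'⟩
    · have := (pull_L_mem (M := M) (hh := hh) (hfh := hfh) t p).1 (hs hp)
      simpa [if_neg hpq] using this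
    · have := (pull_L_mem (M := M) (hh := hh) (hfh := hfh) t q).1 (hs hq)
      simp only [if_pos rfl] at this
      exact this hx'
  · intro hs p hp
    rw [pull_L_mem]
    by_cases hpq : p = q
    · subst hpq
      simp only [if_pos rfl]
      intro x hx
      exact hs ((Fm.mem_props_ssub χ x).2 (Or.inr ⟨hp, hx⟩))
    · simp only [if_neg hpq]
      exact hs ((Fm.mem_props_ssub χ (f p)).2 (Or.inl ⟨p, hp, hpq, rfl⟩))

lemma pull_Aw_iff (hagpp : M.agpp) (i : ℕ) (t : W) (χ : Fm) :
    χ ∈ (M.pull q ψ f hf hh hfh).Aw i t ↔ Fm.ssub q ψ f χ ∈ M.Aw i t := by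
  rw [hagpp i t, pull_Aw_mem]
  constructor
  · intro hχ x hx
    rcases (Fm.mem_props_ssub χ x).1 hx with ⟨p, hp, hpq, rfl⟩ | ⟨hq, hx'⟩
    · have := hχ p hp; simpa [if_neg hpq] using this
    · have := hχ q hq; simp only [if_pos rfl] at this; exact this x hx'
  · intro hχ p hp
    by_cases hpq : p = q
    · subst hpq
      simp only [if_pos rfl]
      intro x hx
      exact hχ x ((Fm.mem_props_ssub χ x).2 (Or.inr ⟨hp, hx⟩))
    · simp only [if_neg hpq]
      exact hχ _ ((Fm.mem_props_ssub χ (f p)).2 (Or.inl ⟨p, hp, hpq, rfl⟩))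

lemma pull_agpp : (M.pull q ψ f hf hh hfh).agpp := by
  intro i t χ
  rw [pull_Aw_mem]
  constructor
  · intro H p hp
    rw [pull_Aw_mem]
    intro y hy
    have : y = p := by simpa [Fm.props] using hy
    subst this
    exact H y hp
  · intro H p hp
    have := (pull_Aw_mem (M := M) (hh := hh) (hfh := hfh) i t (Fm.prop p)).1 (H p hp)
    exact this p (by simp [Fm.props])

lemma pull_ka (hka : M.ka) : (M.pull q ψ f hf hh hfh).ka := by
  intro i s t hR
  have hAw : M.Aw i s = M.Aw i t := hka i s t hR
  show AwC q ψ f (M.Aw i s) = AwC q ψ f (M.Aw i t)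
  rw [hAw]

lemma pull_satAux (hagpp : M.agpp) (hqf : ψ.qcount = 0) (hψs : ψ.free = ∅)
    (U' U : W → Fm → Prop) (hU : ∀ t γ, U' t γ ↔ U t (Fm.ssub q ψ f γ)) :
    ∀ (χ : Fm) (t : W),
      (M.pull q ψ f hf hh hfh).satAux U' t χ ↔ M.satAux U t (Fm.ssub q ψ f χ) := by
  intro χ
  induction χ with
  | prop p =>
      intro t
      have hshow : (M.pull q ψ f hf hh hfh).satAux U' t (Fm.prop p)
          ↔ (p ∈ (M.pull q ψ f hf hh hfh).L t ∧ (M.pull q ψ f hf hh hfh).val t p = true) :=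
        Iff.rfl
      rw [hshow, pull_L_mem, pull_val]
      by_cases hpq : p = q
      · have h1 : Fm.ssub q ψ f (Fm.prop p) = ψ := by simp [Fm.ssub, hpq]
        rw [h1]
        have h2 : M.satAux U t ψ ↔ M.satN 0 t ψ :=
          satAux_qf_indep M U (fun _ _ => False) ψ hqf t
        rw [h2]
        simp only [if_pos hpq]
        by_cases hs : M.satN 0 t ψ
        · simp [hs, satAux_props M (fun _ _ => False) ψ t hs]
        · simp [hs]
      · have h1 : Fm.ssub q ψ f (Fm.prop p) = Fm.prop (f p) := by simp [Fm.ssub, hpq]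
        rw [h1]
        have hshow2 : M.satAux U t (Fm.prop (f p))
            ↔ (f p ∈ M.L t ∧ M.val t (f p) = true) := Iff.rfl
        rw [hshow2]
        simp only [if_neg hpq]
  | var v => intro t; exact Iff.rfl
  | neg φ ih =>
      intro t
      show (φ.props ⊆ _ ∧ ¬ _) ↔ ((Fm.ssub q ψ f φ).props ⊆ M.L t ∧ ¬ _)
      rw [pull_props_subset, ih t]
  | and φ₁ φ₂ ih₁ ih₂ =>
      intro t
      show (_ ∧ _) ↔ (_ ∧ _)
      rw [ih₁ t, ih₂ t]
  | k i φ ih =>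
      intro t
      show (φ.props ⊆ _ ∧ ∀ t', M.R i t t' → _) ↔
        ((Fm.ssub q ψ f φ).props ⊆ M.L t ∧ ∀ t', M.R i t t' → _)
      rw [pull_props_subset]
      constructor
      · rintro ⟨h1, h2⟩
        exact ⟨h1, fun t' ht' => (ih t').1 (h2 t' ht')⟩
      · rintro ⟨h1, h2⟩
        exact ⟨h1, fun t' ht' => (ih t').2 (h2 t' ht')⟩
  | a i φ ih =>
      intro t
      exact pull_Aw_iff hagpp i t φ
  | x i φ ih =>
      intro t
      show ((φ.props ⊆ _ ∧ ∀ t', M.R i t t' → _) ∧ φ ∈ _) ↔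
        (((Fm.ssub q ψ f φ).props ⊆ M.L t ∧ ∀ t', M.R i t t' → _) ∧ _ ∈ M.Aw i t)
      rw [pull_props_subset, pull_Aw_iff hagpp i t φ]
      constructor
      · rintro ⟨⟨h1, h2⟩, h3⟩
        exact ⟨⟨h1, fun t' ht' => (ih t').1 (h2 t' ht')⟩, h3⟩
      · rintro ⟨⟨h1, h2⟩, h3⟩
        exact ⟨⟨h1, fun t' ht' => (ih t').2 (h2 t' ht')⟩, h3⟩
  | all v φ ih =>
      intro t
      show (φ.props ⊆ _ ∧ ∀ β : Fm, β.qcount = 0 → β.free = ∅ → β.props ⊆ _ →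
          U' t (Fm.substV v β φ)) ↔
        ((Fm.ssub q ψ f φ).props ⊆ M.L t ∧ ∀ β : Fm, β.qcount = 0 → β.free = ∅ →
          β.props ⊆ M.L t → U t (Fm.substV v β (Fm.ssub q ψ f φ)))
      rw [pull_props_subset]
      constructor
      · rintro ⟨h1, h2⟩
        refine ⟨h1, fun β hβq hβs hβp => ?_⟩
        have hrs : (Fm.rename hf β).props ⊆ (M.pull q ψ f hf hh hfh).L t := by
          intro x hx
          obtain ⟨y, hy, rfl⟩ := (Fm.mem_props_rename hf β x).1 hx
          rw [pull_L_mem]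
          rw [if_neg (hh y), hfh y]
          exact hβp hy
        have hb := h2 (Fm.rename hf β)
          (by rw [Fm.qcount_rename]; exact hβq)
          (by rw [Fm.free_rename]; exact hβs) hrs
        have := (hU t _).1 hb
        rwa [Fm.ssub_substV hψs, Fm.ssub_rename hh hfh] at this
      · rintro ⟨h1, h2⟩
        refine ⟨h1, fun β hβq hβs hβp => ?_⟩
        rw [hU t _, Fm.ssub_substV hψs]
        exact h2 (Fm.ssub q ψ f β)
          (by rw [Fm.qcount_ssub hqf]; exact hβq)
          (by rw [Fm.free_ssub hψs]; exact hβs)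
          ((pull_props_subset β t).1 hβp)

lemma pull_satN (hagpp : M.agpp) (hqf : ψ.qcount = 0) (hψs : ψ.free = ∅) :
    ∀ (n : ℕ) (χ : Fm) (t : W),
      (M.pull q ψ f hf hh hfh).satN n t χ ↔ M.satN n t (Fm.ssub q ψ f χ) := by
  intro n
  induction n with
  | zero => exact pull_satAux hagpp hqf hψs _ _ (fun _ _ => Iff.rfl)
  | succ n ihn => exact pull_satAux hagpp hqf hψs _ _ (fun t γ => ihn γ t)

end EAS

/-- Substitution: if the sentence `φ` is valid, `q` is a primitive proposition, and
`ψ` is a quantifier-free sentence (possibly mentioning `q`), then `φ[q/ψ]` is valid. -/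
theorem stmt5 (φ : Fm) (hsent : Fm.free φ = ∅) (hv : Valid φ)
    (q : ℕ) (ψ : Fm) (hqf : Fm.qcount ψ = 0) (hψs : Fm.free ψ = ∅) :
    Valid (Fm.substP q ψ φ) := by
  -- choose a bound `N` above `q` and every primitive proposition of `φ`
  obtain ⟨b, hb⟩ := (Fm.props_finite φ).bddAbove
  set N : ℕ := max (b + 1) (q + 1) with hN
  have hqN : q < N := lt_of_lt_of_le (Nat.lt_succ_self q) (le_max_right _ _)
  have hφN : ∀ p ∈ φ.props, p < N := fun p hp =>
    lt_of_lt_of_le (Nat.lt_succ_of_le (hb hp)) (le_max_left _ _)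
  -- the renaming and its right inverse
  set f : ℕ → ℕ := fun p => if p = N then q else if p < N then p else p - 1 with hf_def
  set g : ℕ → ℕ := fun x => if x = q then N else if x < N then x else x + 1 with hg_def
  have hh : ∀ x, g x ≠ q := by
    intro x
    by_cases hxq : x = q
    · simp [hg_def, hxq]
      omega
    · by_cases hxN : x < N
      · simp [hg_def, hxq, hxN]
      · simp [hg_def, hxq, hxN]
        omega
  have hfh : ∀ x, f (g x) = x := by
    intro x
    by_cases hxq : x = q
    · simp [hg_def, hf_def, hxq]
    · by_cases hxN : x < N
      · simp [hg_def, hf_def, hxq, hxN]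
        omega
      · have h1 : ¬ (x + 1 = N) := by omega
        have h2 : ¬ (x + 1 < N) := by omega
        simp [hg_def, hf_def, hxq, hxN, h1, h2]
  have hfix : ∀ p ∈ φ.props, p ≠ q → f p = p := by
    intro p hp _
    have hpN := hφN p hp
    have h1 : p ≠ N := by omega
    simp [hf_def, h1, hpN]
  have hssub : Fm.ssub q ψ f φ = Fm.substP q ψ φ := Fm.ssub_eq_substP φ hfix
  intro W M hagpp hka s hsub
  -- pull back the structure
  have hsub' : φ.props ⊆ (M.pull q ψ f g hh hfh).L s := by
    rw [EAS.pull_props_subset, hssub]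
    exact hsub
  have hφsat := hv W (M.pull q ψ f g hh hfh) EAS.pull_agpp (EAS.pull_ka hka) s hsub'
  have := (EAS.pull_satN (hh := hh) (hfh := hfh) hagpp hqf hψs (Fm.qcount φ) φ s).1 hφsat
  rw [hssub] at this
  show M.satN (Fm.qcount (Fm.substP q ψ φ)) s (Fm.substP q ψ φ)
  have hqc : Fm.qcount (Fm.substP q ψ φ) = Fm.qcount φ := by
    rw [← hssub, Fm.qcount_ssub hqf]
  rw [hqc]
  exact this

end AwarenessPaper
end

section
/- (Satisfiability avoiding a proposition) If Φ is countably infinite and φ is a sentence not mentioning primitive proposition q that is satisfiable in some extended awareness structure, then φ is satisfiable in an extended awareness structure M = (S, L, π, K_1,…,K_n, A_1,…,A_n) in which q ∉ L(s) for every world s ∈ S. -/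
namespace AwarenessPaper

/-! ### Auxiliary lemmas for renaming -/

open Classical in
lemma props_rename (τ : ℕ → ℕ) : ∀ ψ : Fm, Fm.props (Fm.rename τ ψ) = τ '' Fm.props ψ := by
  intro ψ
  induction ψ with
  | prop p => simp [Fm.rename, Fm.props]
  | var v => simp [Fm.rename, Fm.props]
  | neg φ ih => simpa [Fm.rename, Fm.props] using ih
  | and φ₁ φ₂ ih₁ ih₂ => simp [Fm.rename, Fm.props, ih₁, ih₂, Set.image_union]
  | k i φ ih => simpa [Fm.rename, Fm.props] using ih
  | a i φ ih => simpa [Fm.rename, Fm.props] using ih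
  | x i φ ih => simpa [Fm.rename, Fm.props] using ih
  | all v φ ih => simpa [Fm.rename, Fm.props] using ih

lemma qcount_rename (τ : ℕ → ℕ) : ∀ ψ : Fm, Fm.qcount (Fm.rename τ ψ) = Fm.qcount ψ := by
  intro ψ
  induction ψ <;> simp [Fm.rename, Fm.qcount, *]

lemma free_rename (τ : ℕ → ℕ) : ∀ ψ : Fm, Fm.free (Fm.rename τ ψ) = Fm.free ψ := by
  intro ψ
  induction ψ <;> simp [Fm.rename, Fm.free, *]

lemma rename_rename (τ σ : ℕ → ℕ) (hinv : ∀ p, σ (τ p) = p) :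
    ∀ ψ : Fm, Fm.rename σ (Fm.rename τ ψ) = ψ := by
  intro ψ
  induction ψ <;> simp [Fm.rename, hinv, *]

lemma rename_of_subset_range (τ σ : ℕ → ℕ) (hrs : ∀ p ∈ Set.range τ, τ (σ p) = p) :
    ∀ ψ : Fm, Fm.props ψ ⊆ Set.range τ → Fm.rename τ (Fm.rename σ ψ) = ψ := by
  intro ψ
  induction ψ with
  | prop p =>
      intro h
      have : p ∈ Set.range τ := h (by simp [Fm.props])
      simp [Fm.rename, hrs p this]
  | var v => intro _; simp [Fm.rename]
  | neg φ ih => intro h; simp [Fm.rename, ih h]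
  | and φ₁ φ₂ ih₁ ih₂ =>
      intro h
      have h₁ : Fm.props φ₁ ⊆ Set.range τ := fun p hp => h (Set.mem_union_left _ hp)
      have h₂ : Fm.props φ₂ ⊆ Set.range τ := fun p hp => h (Set.mem_union_right _ hp)
      simp [Fm.rename, ih₁ h₁, ih₂ h₂]
  | k i φ ih => intro h; simp [Fm.rename, ih h]
  | a i φ ih => intro h; simp [Fm.rename, ih h]
  | x i φ ih => intro h; simp [Fm.rename, ih h]
  | all v φ ih => intro h; simp [Fm.rename, ih h]

lemma rename_id_of (τ : ℕ → ℕ) :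
    ∀ ψ : Fm, (∀ p ∈ Fm.props ψ, τ p = p) → Fm.rename τ ψ = ψ := by
  intro ψ
  induction ψ with
  | prop p => intro h; simp [Fm.rename, h p (by simp [Fm.props])]
  | var v => intro _; simp [Fm.rename]
  | neg φ ih => intro h; simp [Fm.rename, ih h]
  | and φ₁ φ₂ ih₁ ih₂ =>
      intro h
      have h₁ : ∀ p ∈ Fm.props φ₁, τ p = p := fun p hp => h p (Set.mem_union_left _ hp)
      have h₂ : ∀ p ∈ Fm.props φ₂, τ p = p := fun p hp => h p (Set.mem_union_right _ hp)
      simp [Fm.rename, ih₁ h₁, ih₂ h₂]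
  | k i φ ih => intro h; simp [Fm.rename, ih h]
  | a i φ ih => intro h; simp [Fm.rename, ih h]
  | x i φ ih => intro h; simp [Fm.rename, ih h]
  | all v φ ih => intro h; simp [Fm.rename, ih h]

lemma rename_substV (τ : ℕ → ℕ) (v : ℕ) (β : Fm) :
    ∀ ψ : Fm, Fm.rename τ (Fm.substV v β ψ) = Fm.substV v (Fm.rename τ β) (Fm.rename τ ψ) := by
  intro ψ
  induction ψ with
  | var u =>
      by_cases h : u = v <;> simp [Fm.rename, Fm.substV, h]
  | all u φ ih =>
      by_cases h : u = v <;> simp [Fm.rename, Fm.substV, h, ih]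
  | _ => simp [Fm.rename, Fm.substV, *]

open Classical

/-- The renamed structure: languages, valuations and awareness sets are pushed
forward along an injective renaming `τ` with left inverse `σ`. -/
noncomputable def renameEAS {W : Type} (M : EAS W) (τ σ : ℕ → ℕ)
    (hinv : ∀ p, σ (τ p) = p) : EAS W where
  L s := τ '' M.L s
  L_ne s := (M.L_ne s).image τ
  val s p := if p ∈ Set.range τ then M.val s (σ p) else false
  R := M.R
  Aw i s := {ψ | Fm.props ψ ⊆ Set.range τ ∧ Fm.rename σ ψ ∈ M.Aw i s}
  Aw_lang := by
    intro i s ψ hψ p hp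
    obtain ⟨hrange, hAw⟩ := hψ
    obtain ⟨p₀, hp₀⟩ := hrange hp
    have hσ : σ p ∈ Fm.props (Fm.rename σ ψ) := by
      rw [props_rename]; exact ⟨p, hp, rfl⟩
    have hL : σ p ∈ M.L s := M.Aw_lang i s _ hAw hσ
    have : σ p = p₀ := by rw [← hp₀, hinv]
    exact ⟨σ p, hL, by rw [this, hp₀]⟩

lemma tau_inj (τ σ : ℕ → ℕ) (hinv : ∀ p, σ (τ p) = p) : Function.Injective τ :=
  fun a b h => by have := congrArg σ h; rwa [hinv, hinv] at this

section RenameSat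

variable {W : Type} (M : EAS W) (τ σ : ℕ → ℕ) (hinv : ∀ p, σ (τ p) = p)

include hinv in
lemma mem_image_L_iff (s : W) (p : ℕ) : τ p ∈ τ '' M.L s ↔ p ∈ M.L s :=
  (tau_inj τ σ hinv).mem_set_image

include hinv in
lemma props_subset_iff (s : W) (ψ : Fm) :
    Fm.props (Fm.rename τ ψ) ⊆ τ '' M.L s ↔ Fm.props ψ ⊆ M.L s := by
  rw [props_rename]
  exact Set.image_subset_image_iff (tau_inj τ σ hinv)

include hinv in
lemma aw_rename_iff (i : ℕ) (s : W) (ψ : Fm) :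
    Fm.rename τ ψ ∈ (renameEAS M τ σ hinv).Aw i s ↔ ψ ∈ M.Aw i s := by
  constructor
  · rintro ⟨-, hAw⟩
    rwa [rename_rename τ σ hinv] at hAw
  · intro h
    refine ⟨?_, by rwa [rename_rename τ σ hinv]⟩
    rw [props_rename]
    rintro p ⟨p₀, -, rfl⟩
    exact ⟨p₀, rfl⟩

lemma renameEAS_L {W : Type} (M : EAS W) (τ σ : ℕ → ℕ) (hinv : ∀ p, σ (τ p) = p) (s : W) :
    (renameEAS M τ σ hinv).L s = τ '' M.L s := rfl

lemma renameEAS_R {W : Type} (M : EAS W) (τ σ : ℕ → ℕ) (hinv : ∀ p, σ (τ p) = p) :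
    (renameEAS M τ σ hinv).R = M.R := rfl

include hinv in
lemma satAux_rename (u u' : W → Fm → Prop)
    (hu : ∀ s β, u s β ↔ u' s (Fm.rename τ β)) :
    ∀ (ψ : Fm) (s : W),
      M.satAux u s ψ ↔ (renameEAS M τ σ hinv).satAux u' s (Fm.rename τ ψ) := by
  intro ψ
  induction ψ with
  | prop p =>
      intro s
      have hval : (renameEAS M τ σ hinv).val s (τ p) = M.val s p := by
        simp [renameEAS, hinv]
      simp only [Fm.rename, EAS.satAux, renameEAS_L, hval,
        mem_image_L_iff M τ σ hinv]
  | var v => intro s; exact Iff.rfl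
  | neg φ ih =>
      intro s
      simp only [Fm.rename, EAS.satAux, renameEAS_L,
        props_subset_iff M τ σ hinv, ih s]
  | and φ₁ φ₂ ih₁ ih₂ =>
      intro s
      simp only [Fm.rename, EAS.satAux, ih₁ s, ih₂ s]
  | k i φ ih =>
      intro s
      simp only [Fm.rename, EAS.satAux, renameEAS_L, renameEAS_R,
        props_subset_iff M τ σ hinv]
      constructor
      · rintro ⟨h₁, h₂⟩; exact ⟨h₁, fun t ht => (ih t).mp (h₂ t ht)⟩
      · rintro ⟨h₁, h₂⟩; exact ⟨h₁, fun t ht => (ih t).mpr (h₂ t ht)⟩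
  | a i φ ih =>
      intro s
      simp only [Fm.rename, EAS.satAux]
      exact (aw_rename_iff M τ σ hinv i s φ).symm
  | x i φ ih =>
      intro s
      simp only [Fm.rename, EAS.satAux, renameEAS_L, renameEAS_R,
        props_subset_iff M τ σ hinv, aw_rename_iff M τ σ hinv i s φ]
      constructor
      · rintro ⟨⟨h₁, h₂⟩, h₃⟩; exact ⟨⟨h₁, fun t ht => (ih t).mp (h₂ t ht)⟩, h₃⟩
      · rintro ⟨⟨h₁, h₂⟩, h₃⟩; exact ⟨⟨h₁, fun t ht => (ih t).mpr (h₂ t ht)⟩, h₃⟩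
  | all v φ ih =>
      intro s
      have hrs : ∀ p ∈ Set.range τ, τ (σ p) = p := by
        rintro p ⟨p₀, rfl⟩; rw [hinv]
      simp only [Fm.rename, EAS.satAux, renameEAS_L,
        props_subset_iff M τ σ hinv]
      constructor
      · rintro ⟨h₁, h₂⟩
        refine ⟨h₁, fun β' hq hf hp => ?_⟩
        set β := Fm.rename σ β' with hβ
        have hβ' : Fm.rename τ β = β' :=
          rename_of_subset_range τ σ hrs β' (hp.trans (Set.image_subset_range τ _))
        have hqβ : Fm.qcount β = 0 := by rw [hβ, qcount_rename]; exact hq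
        have hfβ : Fm.free β = ∅ := by rw [hβ, free_rename]; exact hf
        have hpβ : Fm.props β ⊆ M.L s := by
          intro p hpmem
          rw [hβ, props_rename] at hpmem
          obtain ⟨p', hp', rfl⟩ := hpmem
          obtain ⟨p₀, hp₀, hp₀eq⟩ := hp hp'
          rw [← hp₀eq, hinv]; exact hp₀
        have h3 := (hu s (Fm.substV v β φ)).mp (h₂ β hqβ hfβ hpβ)
        rwa [rename_substV, hβ'] at h3
      · rintro ⟨h₁, h₂⟩
        refine ⟨h₁, fun β hq hf hp => ?_⟩
        have hq' : Fm.qcount (Fm.rename τ β) = 0 := by rw [qcount_rename]; exact hq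
        have hf' : Fm.free (Fm.rename τ β) = ∅ := by rw [free_rename]; exact hf
        have hp' : Fm.props (Fm.rename τ β) ⊆ τ '' M.L s := by
          rw [props_rename]; exact Set.image_mono hp
        have := h₂ (Fm.rename τ β) hq' hf' hp'
        rw [← rename_substV] at this
        exact (hu s (Fm.substV v β φ)).mpr this

include hinv in
lemma satN_rename : ∀ (n : ℕ) (s : W) (ψ : Fm),
    M.satN n s ψ ↔ (renameEAS M τ σ hinv).satN n s (Fm.rename τ ψ) := by
  intro n
  induction n with
  | zero =>
      intro s ψ
      exact satAux_rename M τ σ hinv (fun _ _ => False) (fun _ _ => False)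
        (fun _ _ => Iff.rfl) ψ s
  | succ n ihn =>
      intro s ψ
      exact satAux_rename M τ σ hinv _ _ (fun s' β => ihn s' β) ψ s

include hinv in
lemma agpp_rename (h : M.agpp) : (renameEAS M τ σ hinv).agpp := by
  intro i s ψ
  constructor
  · rintro ⟨hrange, hAw⟩ p hp
    refine ⟨by simp [Fm.props, hrange hp], ?_⟩
    show Fm.prop (σ p) ∈ M.Aw i s
    have hσp : σ p ∈ Fm.props (Fm.rename σ ψ) := by
      rw [props_rename]; exact ⟨p, hp, rfl⟩
    exact (h i s _).mp hAw (σ p) hσp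
  · intro hall
    have hrange : Fm.props ψ ⊆ Set.range τ := by
      intro p hp
      exact (hall p hp).1 rfl
    refine ⟨hrange, ?_⟩
    apply (h i s _).mpr
    intro p' hp'
    rw [props_rename] at hp'
    obtain ⟨p, hp, rfl⟩ := hp'
    exact (hall p hp).2

include hinv in
lemma ka_rename (h : M.ka) : (renameEAS M τ σ hinv).ka := by
  intro i s t hst
  show {ψ | _ ∧ Fm.rename σ ψ ∈ M.Aw i s} = {ψ | _ ∧ Fm.rename σ ψ ∈ M.Aw i t}
  rw [h i s t hst]

end RenameSat

/-- Primitive propositions of a formula are bounded. -/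
lemma props_bounded : ∀ ψ : Fm, ∃ B : ℕ, ∀ p ∈ Fm.props ψ, p < B := by
  intro ψ
  induction ψ with
  | prop p => exact ⟨p + 1, by simp [Fm.props]⟩
  | var v => exact ⟨0, by simp [Fm.props]⟩
  | neg φ ih => exact ih
  | and φ₁ φ₂ ih₁ ih₂ =>
      obtain ⟨B₁, h₁⟩ := ih₁
      obtain ⟨B₂, h₂⟩ := ih₂
      refine ⟨max B₁ B₂, ?_⟩
      rintro p (hp | hp)
      · exact lt_of_lt_of_le (h₁ p hp) (le_max_left _ _)
      · exact lt_of_lt_of_le (h₂ p hp) (le_max_right _ _)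
  | k i φ ih => exact ih
  | a i φ ih => exact ih
  | x i φ ih => exact ih
  | all v φ ih => exact ih

/-- Satisfiability avoiding a proposition: a satisfiable sentence not mentioning `q`
is satisfiable in a structure in which `q` is in no local language. -/
theorem stmt10 (φ : Fm) (hsent : Fm.free φ = ∅) (q : ℕ) (hq : q ∉ Fm.props φ)
    (hsat : ∃ (W : Type) (M : EAS W), M.agpp ∧ M.ka ∧ ∃ s : W, M.sat s φ) :
    ∃ (W : Type) (M : EAS W), M.agpp ∧ M.ka ∧ (∃ s : W, M.sat s φ) ∧
      ∀ t : W, q ∉ M.L t := by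
  classical
  obtain ⟨W, M, hagpp, hka, s, hs⟩ := hsat
  obtain ⟨B, hB⟩ := props_bounded φ
  set C : ℕ := max B (q + 1) with hC
  -- the renaming: fixes props of φ, misses q, injective
  set τ : ℕ → ℕ := fun p => if p ∈ Fm.props φ then p else C + 1 + p with hτ
  have hfix : ∀ p ∈ Fm.props φ, τ p = p := fun p hp => by simp [hτ, hp]
  have hτinj : Function.Injective τ := by
    intro a b hab
    have hBC : B ≤ C := le_max_left _ _
    by_cases ha : a ∈ Fm.props φ <;> by_cases hb : b ∈ Fm.props φ <;>
      simp [hτ, ha, hb] at hab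
    · exact hab
    · have := hB a ha; omega
    · have := hB b hb; omega
    · omega
  have hqτ : q ∉ Set.range τ := by
    rintro ⟨p, hp⟩
    by_cases h : p ∈ Fm.props φ
    · simp [hτ, h] at hp; exact hq (hp ▸ h)
    · simp [hτ, h] at hp
      have : q + 1 ≤ C := le_max_right _ _
      omega
  obtain ⟨σ, hσ⟩ := hτinj.hasLeftInverse
  have hinv : ∀ p, σ (τ p) = p := hσ
  refine ⟨W, renameEAS M τ σ hinv, agpp_rename M τ σ hinv hagpp,
    ka_rename M τ σ hinv hka, ⟨s, ?_⟩, ?_⟩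
  · have := (satN_rename M τ σ hinv (Fm.qcount φ) s φ).mp hs
    rwa [rename_id_of τ φ hfix] at this
  · intro t hqL
    obtain ⟨p, -, hp⟩ := hqL
    exact hqτ ⟨p, hp⟩

end AwarenessPaper
end

section
/- (Uncertainty about full awareness is satisfiable) There exists an extended awareness structure M (satisfying agpp and ka, with an equivalence-relation K_i) and a world s such that agent i considers possible a world t₁ where A_i(s) contains every quantifier-free sentence over L(t₁) and a world t₂ where some quantifier-free sentence over L(t₂) is not in A_i(s); consequently (M,s) ⊨ ¬K_i ¬∀x A_i x ∧ ¬K_i ∀x A_i x. -/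
namespace AwarenessPaper

/-- The two-world model: world `false` has language `{0}`, world `true` has `{0,1}`;
agent awareness everywhere consists of formulas over `{0}`. -/
def M0 : EAS Bool where
  L := fun b => if b then ({0, 1} : Set ℕ) else {0}
  L_ne := by intro s; cases s <;> simp
  val := fun _ _ => true
  R := fun _ _ _ => True
  Aw := fun _ _ => {φ | Fm.props φ ⊆ ({0} : Set ℕ)}
  Aw_lang := by
    intro i s φ hφ
    cases s
    · simpa using hφ
    · exact hφ.trans (by simp)

/-- Uncertainty about full awareness is satisfiable. -/
theorem stmt14 : ∃ (W : Type) (M : EAS W) (i : ℕ) (s t₁ t₂ : W),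
    M.agpp ∧ M.ka ∧ Equivalence (M.R i) ∧ M.R i s t₁ ∧ M.R i s t₂ ∧
    (∀ β : Fm, Fm.qcount β = 0 → Fm.free β = ∅ → Fm.props β ⊆ M.L t₁ → β ∈ M.Aw i s) ∧
    (∃ β : Fm, Fm.qcount β = 0 ∧ Fm.free β = ∅ ∧ Fm.props β ⊆ M.L t₂ ∧ β ∉ M.Aw i s) ∧
    M.sat s (Fm.and (.neg (.k i (.neg (.all 0 (.a i (.var 0))))))
                    (.neg (.k i (.all 0 (.a i (.var 0)))))) := by
  refine ⟨Bool, M0, 0, false, false, true, ?_, ?_, ?_, trivial, trivial, ?_, ?_, ?_⟩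
  · intro i s φ
    simp only [M0, Set.mem_setOf_eq]
    constructor
    · intro h p hp
      simpa [Fm.props] using h hp
    · intro h p hp
      simpa [Fm.props] using h p hp
  · intro i s t _; rfl
  · exact ⟨fun _ => trivial, fun {_ _} _ => trivial, fun {_ _ _} _ _ => trivial⟩
  · intro β _ _ hβ
    simpa [M0] using hβ
  · refine ⟨Fm.prop 1, rfl, rfl, ?_, ?_⟩
    · simp [M0, Fm.props]
    · simp [M0, Fm.props]
  · show M0.satN 1 false _
    refine ⟨⟨?_, ?_⟩, ⟨?_, ?_⟩⟩
    · intro p hp; simp [Fm.props] at hp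
    · rintro ⟨-, h⟩
      obtain ⟨-, h2⟩ := h false trivial
      apply h2
      refine ⟨?_, ?_⟩
      · intro p hp; simp [Fm.props] at hp
      · intro β hq hf hβ
        show (Fm.substV 0 β (Fm.a 0 (Fm.var 0))) ∈ M0.Aw 0 false
        simp only [Fm.substV, if_pos rfl]
        exact fun p hp => by simpa [M0] using hβ (by simpa [Fm.props] using hp)
    · intro p hp; simp [Fm.props] at hp
    · rintro ⟨-, h⟩
      obtain ⟨-, h2⟩ := h true trivial
      have h3 := h2 (Fm.prop 1) rfl rfl (by simp [M0, Fm.props])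
      simp only [Fm.substV, if_pos rfl] at h3
      have : (1 : ℕ) ∈ ({0} : Set ℕ) := h3 (by simp [Fm.props])
      simp at this

end AwarenessPaper
end
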